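/- arXiv:1811.02039 — 3 statements merged into one kernel-verified Lean document; each statement's English description precedes it below -/
import Mathlib

section
/- For partitions λ of n with prescribed first two parts λ_1, λ_2, Σ_{λ=(λ_1,λ_2,…)} d_λ² ≤ C(n,λ_1)² · C(n−λ_1, λ_2)² · (n − λ_1 − λ_2)!. -/
set_option maxHeartbeats 1600000


open Finset

/-- Young diagram of a partition -/
def toYD {n : ℕ} (p : Nat.Partition n) : YoungDiagram :=
  YoungDiagram.ofRowLens (p.parts.sort (· ≥ ·)) (List.sortedGE_iff_pairwise.mpr (p.parts.pairwise_sort (· ≥ ·)))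

/-- largest part of a partition -/
def firstPart {n : ℕ} (p : Nat.Partition n) : ℕ := (p.parts.sort (· ≥ ·)).headI

/-- second largest part of a partition (0 if there is only one part) -/
def secondPart {n : ℕ} (p : Nat.Partition n) : ℕ := ((p.parts.sort (· ≥ ·)).drop 1).headI

/-- number of standard Young tableaux of shape `Y` (the dimension `d_λ`) -/
def sytCard (Y : YoungDiagram) : ℕ :=
  Fintype.card {f : (↥Y.cells) ≃ Fin Y.cells.card //
    (∀ a b : Y.cells, (a : ℕ × ℕ).1 = (b : ℕ × ℕ).1 → (a : ℕ × ℕ).2 < (b : ℕ × ℕ).2 →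
      f a < f b) ∧
    (∀ a b : Y.cells, (a : ℕ × ℕ).2 = (b : ℕ × ℕ).2 → (a : ℕ × ℕ).1 < (b : ℕ × ℕ).1 →
      f a < f b)}

namespace SYTProof
open YoungDiagram

/-- cardinality of cellsOfRowLens is the sum -/
lemma card_cellsOfRowLens (w : List ℕ) : (YoungDiagram.cellsOfRowLens w).card = w.sum := by
  induction w with
  | nil => simp [YoungDiagram.cellsOfRowLens]
  | cons a ws ih =>
    rw [YoungDiagram.cellsOfRowLens, Finset.card_union_of_disjoint, Finset.card_map, ih]
    · simp [add_comm]
    · simp only [Finset.disjoint_left]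
      rintro ⟨i, j⟩ hmem hmem'
      simp only [Finset.mem_product, Finset.mem_singleton] at hmem
      simp only [Finset.mem_map, Function.Embedding.prodMap, Function.Embedding.coeFn_mk,
        Prod.exists] at hmem'
      obtain ⟨i', j', _, h⟩ := hmem'
      obtain rfl : i = 0 := hmem.1
      simp [Prod.ext_iff] at h
      
lemma card_ofRowLens (w : List ℕ) (hw : w.SortedGE) :
    (ofRowLens w hw).card = w.sum := card_cellsOfRowLens w

lemma rowLens_sum (Y : YoungDiagram) : Y.rowLens.sum = Y.card := by
  conv_rhs => rw [← ofRowLens_to_rowLens_eq_self (μ := Y)]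
  exact (card_ofRowLens _ _).symm

/-- partition attached to a Young diagram -/
def toPart (Y : YoungDiagram) {m : ℕ} (h : Y.card = m) : Nat.Partition m where
  parts := ↑Y.rowLens
  parts_pos := by
    intro i hi
    exact Y.pos_of_mem_rowLens i (by simpa using hi)
  parts_sum := by simpa [rowLens_sum] using h


lemma toPart_parts (Y : YoungDiagram) {m : ℕ} (h : Y.card = m) :
    (toPart Y h).parts = ↑Y.rowLens := rfl


lemma sort_coe (l : List ℕ) (hl : l.SortedGE) : Multiset.sort (↑l) (· ≥ ·) = l :=
  List.Perm.eq_of_sortedGE (List.sortedGE_iff_pairwise.mpr (Multiset.pairwise_sort _ _)) hl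
    (Multiset.coe_eq_coe.mp (by rw [Multiset.sort_eq]))

lemma ofRowLens_congr {w w' : List ℕ} (hw : w.SortedGE) (hw' : w'.SortedGE)
    (h : w = w') : ofRowLens w hw = ofRowLens w' hw' := by subst h; rfl

lemma toYD_toPart (Y : YoungDiagram) {m : ℕ} (h : Y.card = m) : toYD (toPart Y h) = Y := by
  unfold toYD
  rw [ofRowLens_congr _ (Y.rowLens_sorted)
    (by rw [toPart_parts]; exact sort_coe _ Y.rowLens_sorted)]
  exact ofRowLens_to_rowLens_eq_self

lemma toYD_card {n : ℕ} (p : Nat.Partition n) : (toYD p).card = n := by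
  rw [toYD, card_ofRowLens]
  rw [← Multiset.sum_coe, Multiset.sort_eq, p.parts_sum]

lemma toYD_rowLens {n : ℕ} (p : Nat.Partition n) :
    (toYD p).rowLens = p.parts.sort (· ≥ ·) :=
  rowLens_ofRowLens_eq_self (fun x hx => p.parts_pos (by
    rw [← Multiset.mem_coe, Multiset.sort_eq] at hx; exact hx))

lemma toYD_injective {n : ℕ} : Function.Injective (toYD (n := n)) := by
  intro p q h
  have : p.parts = q.parts := by
    rw [← Multiset.sort_eq p.parts (· ≥ ·), ← Multiset.sort_eq q.parts (· ≥ ·),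
      ← toYD_rowLens, ← toYD_rowLens, h]
  cases p; cases q; simp_all

instance : DecidableEq YoungDiagram := fun Y Z =>
  decidable_of_iff (Y.cells = Z.cells) (by constructor <;> intro h <;> [ext c; rw [h]] <;>
    simp [← YoungDiagram.mem_cells, h])

/-- the finset of Young diagrams with `m` cells -/
def YDset (m : ℕ) : Finset YoungDiagram :=
  (Finset.univ : Finset (Nat.Partition m)).image toYD

lemma mem_YDset {m : ℕ} {Y : YoungDiagram} : Y ∈ YDset m ↔ Y.card = m := by
  constructor
  · rintro h
    rw [YDset, Finset.mem_image] at h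
    obtain ⟨p, _, rfl⟩ := h
    exact toYD_card p
  · intro h
    rw [YDset, Finset.mem_image]
    exact ⟨toPart Y h, Finset.mem_univ _, toYD_toPart Y h⟩

lemma sum_YDset {M : Type*} [AddCommMonoid M] (m : ℕ) (g : YoungDiagram → M) :
    ∑ Y ∈ YDset m, g Y = ∑ p : Nat.Partition m, g (toYD p) :=
  Finset.sum_image (fun x _ y _ h => toYD_injective h)

lemma rowLen_eq_zero {Y : YoungDiagram} {i : ℕ} (h : (i, 0) ∉ Y) : Y.rowLen i = 0 := by
  by_contra hpos
  exact h (mem_iff_lt_rowLen.mpr (Nat.pos_of_ne_zero hpos))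

lemma rowLen_getD (w : List ℕ) (hw : w.SortedGE) (i : ℕ) :
    (ofRowLens w hw).rowLen i = w.getD i 0 := by
  by_cases h : i < w.length
  · rw [rowLen_ofRowLens ⟨i, h⟩, List.getD_eq_getElem _ _ h]; rfl
  · rw [List.getD_eq_default _ _ (by omega), rowLen_eq_zero]
    rw [mem_ofRowLens]
    push_neg
    intro hlt
    omega

lemma headI_eq_getD (w : List ℕ) (i : ℕ) : (w.drop i).headI = w.getD i 0 := by
  induction w generalizing i with
  | nil => simp
  | cons a l ih =>
    cases i with
    | zero => simp
    | succ k => simpa using ih k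

lemma firstPart_eq {n : ℕ} (p : Nat.Partition n) : firstPart p = (toYD p).rowLen 0 := by
  rw [firstPart, toYD, rowLen_getD, ← headI_eq_getD, List.drop_zero]

lemma secondPart_eq {n : ℕ} (p : Nat.Partition n) : secondPart p = (toYD p).rowLen 1 := by
  rw [secondPart, toYD, rowLen_getD, ← headI_eq_getD]


section Corners

/-- rows where a cell can be added -/
def addIdx (Y : YoungDiagram) : Finset ℕ :=
  (Finset.range (Y.colLen 0 + 1)).filter (fun i => i = 0 ∨ Y.rowLen i < Y.rowLen (i-1))

/-- rows where a cell can be removed -/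
def remIdx (Y : YoungDiagram) : Finset ℕ :=
  (Finset.range (Y.colLen 0)).filter (fun i => Y.rowLen (i+1) < Y.rowLen i)

lemma mem_addIdx {Y : YoungDiagram} {i : ℕ} :
    i ∈ addIdx Y ↔ (i = 0 ∨ Y.rowLen i < Y.rowLen (i-1)) := by
  rw [addIdx, Finset.mem_filter, Finset.mem_range, and_iff_right_iff_imp]
  rintro (rfl | h)
  · omega
  · have h0 : 0 < Y.rowLen (i-1) := by omega
    have : (i-1, 0) ∈ Y := mem_iff_lt_rowLen.mpr h0
    have := mem_iff_lt_colLen.mp this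
    omega

lemma mem_remIdx {Y : YoungDiagram} {i : ℕ} :
    i ∈ remIdx Y ↔ Y.rowLen (i+1) < Y.rowLen i := by
  rw [remIdx, Finset.mem_filter, Finset.mem_range, and_iff_right_iff_imp]
  intro h
  have : (i, 0) ∈ Y := mem_iff_lt_rowLen.mpr (by omega)
  exact mem_iff_lt_colLen.mp this

lemma card_addIdx (Y : YoungDiagram) : (addIdx Y).card = (remIdx Y).card + 1 := by
  have himg : addIdx Y = insert 0 ((remIdx Y).image (· + 1)) := by
    ext i
    cases i with
    | zero => simp [mem_addIdx]
    | succ k =>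
      simp only [mem_addIdx, Finset.mem_insert, Finset.mem_image, mem_remIdx]
      constructor
      · rintro (h | h)
        · omega
        · exact Or.inr ⟨k, by simpa using h, rfl⟩
      · rintro (h | ⟨a, ha, h⟩)
        · omega
        · right
          obtain rfl : a = k := by omega
          simpa using ha
  rw [himg, Finset.card_insert_of_notMem (by simp), Finset.card_image_of_injective _
    (fun a b h => by omega)]

/-- adding a cell at the end of row `i` -/
def addCell (Y : YoungDiagram) (i : ℕ) (h : i = 0 ∨ Y.rowLen i < Y.rowLen (i-1)) :
    YoungDiagram where
  cells := insert (i, Y.rowLen i) Y.cells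
  isLowerSet := by
    rintro ⟨c1, c2⟩ ⟨a1, a2⟩ ⟨(ha1 : a1 ≤ c1), (ha2 : a2 ≤ c2)⟩ hc
    simp only [Finset.coe_insert, Set.mem_insert_iff, Finset.mem_coe, YoungDiagram.mem_cells] at hc ⊢
    rcases hc with hc | hc
    · obtain ⟨hc1, hc2⟩ : c1 = i ∧ c2 = Y.rowLen i := by simpa [Prod.ext_iff] using hc
      rcases lt_or_eq_of_le ha2 with h2 | h2
      · right
        have hm : (i, a2) ∈ Y := YoungDiagram.mem_iff_lt_rowLen.mpr (by omega)
        exact Y.up_left_mem (by omega) le_rfl hm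
      · rcases lt_or_eq_of_le ha1 with h1 | h1
        · right
          rcases h with h | h
          · omega
          · refine YoungDiagram.mem_iff_lt_rowLen.mpr ?_
            have := Y.rowLen_anti a1 (i-1) (by omega)
            omega
        · exact Or.inl (Prod.ext (by omega) (by omega))
    · exact Or.inr (Y.up_left_mem ha1 ha2 hc)

lemma mem_addCell {Y : YoungDiagram} {i : ℕ} {h : i = 0 ∨ Y.rowLen i < Y.rowLen (i-1)}
    {c : ℕ × ℕ} :
    c ∈ addCell Y i h ↔ c = (i, Y.rowLen i) ∨ c ∈ Y := by
  simp [addCell, ← YoungDiagram.mem_cells]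

lemma newCell_not_mem (Y : YoungDiagram) (i : ℕ) : (i, Y.rowLen i) ∉ Y := by
  rw [YoungDiagram.mem_iff_lt_rowLen]; omega

lemma addCell_card {Y : YoungDiagram} {i : ℕ} {h : i = 0 ∨ Y.rowLen i < Y.rowLen (i-1)} :
    (addCell Y i h).card = Y.card + 1 := by
  show (insert (i, Y.rowLen i) Y.cells).card = Y.cells.card + 1
  rw [Finset.card_insert_of_notMem (newCell_not_mem Y i)]

lemma le_addCell (Y : YoungDiagram) (i : ℕ) (h) : Y ≤ addCell Y i h := by
  intro c hc
  exact mem_addCell.mpr (Or.inr hc)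

/-- removing the last cell of row `i` -/
def eraseC (Y : YoungDiagram) (i : ℕ) (h : Y.rowLen (i+1) < Y.rowLen i) : YoungDiagram where
  cells := Y.cells.erase (i, Y.rowLen i - 1)
  isLowerSet := by
    rintro ⟨c1, c2⟩ ⟨a1, a2⟩ ⟨(ha1 : a1 ≤ c1), (ha2 : a2 ≤ c2)⟩ hc
    simp only [Finset.coe_erase, Set.mem_diff, Finset.mem_coe, YoungDiagram.mem_cells,
      Set.mem_singleton_iff] at hc ⊢
    obtain ⟨hcY, hne⟩ := hc
    refine ⟨Y.up_left_mem ha1 ha2 hcY, ?_⟩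
    intro heq
    have h1 : a1 = i := congrArg Prod.fst heq
    have h2 : a2 = Y.rowLen i - 1 := congrArg Prod.snd heq
    apply hne
    have hc2 : c2 < Y.rowLen c1 := YoungDiagram.mem_iff_lt_rowLen.mp hcY
    have hcle : Y.rowLen c1 ≤ Y.rowLen i := Y.rowLen_anti i c1 (by omega)
    have hc1 : c1 = i := by
      by_contra hne1
      have h3 : Y.rowLen c1 ≤ Y.rowLen (i+1) := Y.rowLen_anti (i+1) c1 (by omega)
      omega
    exact Prod.ext hc1 (by omega)

lemma mem_eraseC {Y : YoungDiagram} {i : ℕ} {h : Y.rowLen (i+1) < Y.rowLen i}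
    {c : ℕ × ℕ} :
    c ∈ eraseC Y i h ↔ c ≠ (i, Y.rowLen i - 1) ∧ c ∈ Y := by
  simp [eraseC, ← YoungDiagram.mem_cells]

lemma eraseC_card {Y : YoungDiagram} {i : ℕ} {h : Y.rowLen (i+1) < Y.rowLen i} :
    (eraseC Y i h).card = Y.card - 1 := by
  show (Y.cells.erase (i, Y.rowLen i - 1)).card = Y.cells.card - 1
  rw [Finset.card_erase_of_mem]
  exact YoungDiagram.mem_iff_lt_rowLen.mpr (by omega)

lemma eraseC_le (Y : YoungDiagram) (i : ℕ) (h) : eraseC Y i h ≤ Y := by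
  intro c hc
  exact (mem_eraseC.mp hc).2

end Corners

section Covers

instance : DecidableRel ((· ≤ ·) : YoungDiagram → YoungDiagram → Prop) := fun Y Z =>
  decidable_of_iff (Y.cells ⊆ Z.cells) YoungDiagram.cells_subset_iff

lemma card_mono {Y Z : YoungDiagram} (h : Y ≤ Z) : Y.card ≤ Z.card :=
  Finset.card_le_card (YoungDiagram.cells_subset_iff.mpr h)

lemma eq_of_le_of_card_le {Y Z : YoungDiagram} (h : Y ≤ Z) (hc : Z.card ≤ Y.card) : Y = Z :=
  YoungDiagram.ext (Finset.eq_of_subset_of_card_le (YoungDiagram.cells_subset_iff.mpr h) hc)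

lemma cover_above_structure {Y Z : YoungDiagram} {m : ℕ} (hY : Y.card = m) (hZ : Z.card = m+1)
    (hle : Y ≤ Z) {c : ℕ × ℕ} (hcZ : c ∈ Z) (hcY : c ∉ Y)
    (huniq : ∀ x : ℕ × ℕ, x ∈ Z → x ∉ Y → x = c) :
    ∃ h : c.1 = 0 ∨ Y.rowLen c.1 < Y.rowLen (c.1 - 1),
      c.2 = Y.rowLen c.1 ∧ Z = addCell Y c.1 h := by
  have hcZ' : (c.1, c.2) ∈ Z := by simpa using hcZ
  have hge : Y.rowLen c.1 ≤ c.2 := by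
    by_contra hlt
    exact hcY (by simpa using YoungDiagram.mem_iff_lt_rowLen.mpr (show c.2 < Y.rowLen c.1 by omega))
  have h2 : c.2 = Y.rowLen c.1 := by
    by_contra hne
    have hxZ : (c.1, Y.rowLen c.1) ∈ Z := Z.up_left_mem le_rfl (by omega) hcZ'
    have := huniq _ hxZ (newCell_not_mem Y c.1)
    have := congrArg Prod.snd this
    simp only at this
    omega
  have hcond : c.1 = 0 ∨ Y.rowLen c.1 < Y.rowLen (c.1 - 1) := by
    rcases Nat.eq_zero_or_pos c.1 with h0 | h0
    · exact Or.inl h0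
    · right
      have hxZ : (c.1 - 1, c.2) ∈ Z := Z.up_left_mem (by omega) le_rfl hcZ'
      have hxY : (c.1 - 1, c.2) ∈ Y := by
        by_contra hx
        have := congrArg Prod.fst (huniq _ hxZ hx)
        simp only at this
        omega
      have := YoungDiagram.mem_iff_lt_rowLen.mp hxY
      omega
  refine ⟨hcond, h2, ?_⟩
  have hsub : (addCell Y c.1 hcond).cells ⊆ Z.cells := by
    intro x hx
    rcases mem_addCell.mp hx with hx | hx
    · subst hx
      show ((c.1, Y.rowLen c.1) : ℕ × ℕ) ∈ Z
      rw [show ((c.1, Y.rowLen c.1) : ℕ × ℕ) = c from Prod.ext rfl h2.symm]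
      exact hcZ
    · exact hle hx
  have hcells : (addCell Y c.1 hcond).cells = Z.cells :=
    Finset.eq_of_subset_of_card_le hsub
      (by show Z.card ≤ (addCell Y c.1 hcond).card; rw [addCell_card, hY, hZ])
  exact (YoungDiagram.ext hcells).symm

lemma cover_below_structure {R Y : YoungDiagram} {m : ℕ} (hR : R.card = m) (hY : Y.card = m+1)
    (hle : R ≤ Y) {c : ℕ × ℕ} (hcY : c ∈ Y) (hcR : c ∉ R)
    (huniq : ∀ x : ℕ × ℕ, x ∈ Y → x ∉ R → x = c) :
    ∃ h : Y.rowLen (c.1+1) < Y.rowLen c.1,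
      c.2 = Y.rowLen c.1 - 1 ∧ R = eraseC Y c.1 h := by
  have hcY' : (c.1, c.2) ∈ Y := by simpa using hcY
  have hc2 : c.2 < Y.rowLen c.1 := YoungDiagram.mem_iff_lt_rowLen.mp hcY'
  have h2 : c.2 = Y.rowLen c.1 - 1 := by
    by_contra hne
    have hxY : (c.1, c.2 + 1) ∈ Y := YoungDiagram.mem_iff_lt_rowLen.mpr (by omega)
    have hxR : (c.1, c.2 + 1) ∉ R := by
      intro hx
      exact hcR (by simpa using R.up_left_mem le_rfl (by omega) hx)
    have := congrArg Prod.snd (huniq _ hxY hxR)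
    simp only at this
    omega
  have hcond : Y.rowLen (c.1+1) < Y.rowLen c.1 := by
    by_contra hge
    have hxY : (c.1 + 1, c.2) ∈ Y := YoungDiagram.mem_iff_lt_rowLen.mpr (by omega)
    have hxR : (c.1 + 1, c.2) ∉ R := by
      intro hx
      exact hcR (by simpa using R.up_left_mem (by omega) le_rfl hx)
    have := congrArg Prod.fst (huniq _ hxY hxR)
    simp only at this
    omega
  refine ⟨hcond, h2, ?_⟩
  have hsub : R.cells ⊆ (eraseC Y c.1 hcond).cells := by
    intro x hx
    refine mem_eraseC.mpr ⟨?_, hle hx⟩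
    intro heq
    apply hcR
    rw [show c = (c.1, Y.rowLen c.1 - 1) from Prod.ext rfl h2, ← heq]
    exact hx
  have hcells : R.cells = (eraseC Y c.1 hcond).cells :=
    Finset.eq_of_subset_of_card_le hsub
      (by show (eraseC Y c.1 hcond).card ≤ R.card; rw [eraseC_card, hY, hR]; omega)
  exact YoungDiagram.ext hcells

lemma diff_uniq {Y Z : YoungDiagram} (h : (Z.cells \ Y.cells).card = 1) :
    ∃ c : ℕ × ℕ, (c ∈ Z ∧ c ∉ Y) ∧ ∀ x : ℕ × ℕ, x ∈ Z → x ∉ Y → x = c := by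
  obtain ⟨c, hceq⟩ := Finset.card_eq_one.mp h
  have hcmem : c ∈ Z.cells \ Y.cells := by rw [hceq]; exact Finset.mem_singleton_self c
  rw [Finset.mem_sdiff] at hcmem
  refine ⟨c, ⟨hcmem.1, hcmem.2⟩, fun x hx1 hx2 => ?_⟩
  have : x ∈ Z.cells \ Y.cells := Finset.mem_sdiff.mpr ⟨hx1, hx2⟩
  rw [hceq] at this
  exact Finset.mem_singleton.mp this

lemma covers_above_eq (Y : YoungDiagram) {m : ℕ} (hY : Y.card = m) :
    (YDset (m+1)).filter (fun Z => Y ≤ Z) =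
      (addIdx Y).attach.image (fun i => addCell Y i.1 (mem_addIdx.mp i.2)) := by
  ext Z
  simp only [Finset.mem_filter, Finset.mem_image, Finset.mem_attach, true_and]
  constructor
  · rintro ⟨hZY, hle⟩
    have hZc : Z.card = m+1 := mem_YDset.mp hZY
    have hdc : (Z.cells \ Y.cells).card = 1 := by
      rw [Finset.card_sdiff_of_subset (YoungDiagram.cells_subset_iff.mpr hle)]
      show Z.card - Y.card = 1
      omega
    obtain ⟨c, ⟨hcZ, hcY⟩, huniq⟩ := diff_uniq hdc
    obtain ⟨hcond, _, hZeq⟩ := cover_above_structure hY hZc hle hcZ hcY huniq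
    exact ⟨⟨c.1, mem_addIdx.mpr hcond⟩, hZeq.symm⟩
  · rintro ⟨⟨i, hi⟩, rfl⟩
    exact ⟨mem_YDset.mpr (by rw [addCell_card, hY]), le_addCell _ _ _⟩

lemma covers_below_eq (Y : YoungDiagram) {m : ℕ} (hY : Y.card = m+1) :
    (YDset m).filter (fun R => R ≤ Y) =
      (remIdx Y).attach.image (fun i => eraseC Y i.1 (mem_remIdx.mp i.2)) := by
  ext R
  simp only [Finset.mem_filter, Finset.mem_image, Finset.mem_attach, true_and]
  constructor
  · rintro ⟨hRY, hle⟩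
    have hRc : R.card = m := mem_YDset.mp hRY
    have hdc : (Y.cells \ R.cells).card = 1 := by
      rw [Finset.card_sdiff_of_subset (YoungDiagram.cells_subset_iff.mpr hle)]
      show Y.card - R.card = 1
      omega
    obtain ⟨c, ⟨hcY, hcR⟩, huniq⟩ := diff_uniq hdc
    obtain ⟨hcond, _, hReq⟩ := cover_below_structure hRc hY hle hcY hcR huniq
    exact ⟨⟨c.1, mem_remIdx.mpr hcond⟩, hReq.symm⟩
  · rintro ⟨⟨i, hi⟩, rfl⟩
    refine ⟨mem_YDset.mpr (by rw [eraseC_card, hY]; omega), eraseC_le _ _ _⟩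

lemma addCell_injOn (Y : YoungDiagram) {i i' : ℕ} {h h'}
    (heq : addCell Y i h = addCell Y i' h') : i = i' := by
  have : ((i, Y.rowLen i) : ℕ × ℕ) ∈ addCell Y i' h' := by
    rw [← heq]; exact mem_addCell.mpr (Or.inl rfl)
  rcases mem_addCell.mp this with hx | hx
  · exact congrArg Prod.fst hx
  · exact absurd hx (newCell_not_mem Y i)

lemma eraseC_injOn (Y : YoungDiagram) {i i' : ℕ} {h h'}
    (heq : eraseC Y i h = eraseC Y i' h') : i = i' := by
  by_contra hne
  have h1 : ((i, Y.rowLen i - 1) : ℕ × ℕ) ∈ Y := YoungDiagram.mem_iff_lt_rowLen.mpr (by omega)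
  have h2 : ((i, Y.rowLen i - 1) : ℕ × ℕ) ∈ eraseC Y i' h' := by
    refine mem_eraseC.mpr ⟨?_, h1⟩
    intro hx
    exact hne (congrArg Prod.fst hx)
  rw [← heq] at h2
  exact absurd (mem_eraseC.mp h2).1 (by simp)

lemma sum_above {M : Type*} [AddCommMonoid M] (Y : YoungDiagram) {m : ℕ} (hY : Y.card = m)
    (g : YoungDiagram → M) :
    ∑ Z ∈ (YDset (m+1)).filter (fun Z => Y ≤ Z), g Z =
    ∑ i ∈ (addIdx Y).attach, g (addCell Y i.1 (mem_addIdx.mp i.2)) := by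
  rw [covers_above_eq Y hY]
  exact Finset.sum_image (fun x _ y _ h => Subtype.ext (addCell_injOn Y h))

lemma sum_below {M : Type*} [AddCommMonoid M] (Y : YoungDiagram) {m : ℕ} (hY : Y.card = m+1)
    (g : YoungDiagram → M) :
    ∑ R ∈ (YDset m).filter (fun R => R ≤ Y), g R =
    ∑ i ∈ (remIdx Y).attach, g (eraseC Y i.1 (mem_remIdx.mp i.2)) := by
  rw [covers_below_eq Y hY]
  exact Finset.sum_image (fun x _ y _ h => Subtype.ext (eraseC_injOn Y h))

lemma count_above (Y : YoungDiagram) {m : ℕ} (hY : Y.card = m) :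
    ((YDset (m+1)).filter (fun Z => Y ≤ Z)).card = (addIdx Y).card := by
  rw [Finset.card_eq_sum_ones, sum_above Y hY (fun _ => 1), Finset.sum_const, smul_eq_mul,
    mul_one, Finset.card_attach]

lemma count_below (Y : YoungDiagram) {m : ℕ} (hY : Y.card = m+1) :
    ((YDset m).filter (fun R => R ≤ Y)).card = (remIdx Y).card := by
  rw [Finset.card_eq_sum_ones, sum_below Y hY (fun _ => 1), Finset.sum_const, smul_eq_mul,
    mul_one, Finset.card_attach]

lemma count_above_below (Y : YoungDiagram) {m : ℕ} (hY : Y.card = m+1) :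
    ((YDset (m+2)).filter (fun Z => Y ≤ Z)).card =
      ((YDset m).filter (fun R => R ≤ Y)).card + 1 := by
  rw [count_above Y hY, count_below Y hY, card_addIdx]

lemma cross_count {Y Y' : YoungDiagram} {m : ℕ} (hY : Y.card = m+1) (hY' : Y'.card = m+1)
    (hne : Y ≠ Y') :
    ((YDset (m+2)).filter (fun Z => Y ≤ Z ∧ Y' ≤ Z)).card =
    ((YDset m).filter (fun R => R ≤ Y ∧ R ≤ Y')).card := by
  have hsum : (Y ⊔ Y').card + (Y ⊓ Y').card = (m+1) + (m+1) := by
    have h := Finset.card_union_add_card_inter Y.cells Y'.cells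
    rw [← YoungDiagram.cells_sup, ← YoungDiagram.cells_inf] at h
    rw [show (Y ⊔ Y').card = (Y ⊔ Y').cells.card from rfl,
      show (Y ⊓ Y').card = (Y ⊓ Y').cells.card from rfl, h]
    rw [show Y.cells.card = Y.card from rfl, show Y'.cells.card = Y'.card from rfl, hY, hY']
  have hlt : m+1 < (Y ⊔ Y').card := by
    rcases lt_or_eq_of_le (card_mono (le_sup_left : Y ≤ Y ⊔ Y')) with h | h
    · omega
    · exfalso
      have hYeq : Y = Y ⊔ Y' := eq_of_le_of_card_le le_sup_left (le_of_eq h.symm)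
      have : Y' ≤ Y := by rw [hYeq]; exact le_sup_right
      exact hne (eq_of_le_of_card_le this (by omega)).symm
  rcases eq_or_lt_of_le (Nat.succ_le_of_lt hlt) with hcs | hcs
  · -- card (Y ⊔ Y') = m + 2
    have hup : (YDset (m+2)).filter (fun Z => Y ≤ Z ∧ Y' ≤ Z) = {Y ⊔ Y'} := by
      ext Z
      simp only [Finset.mem_filter, Finset.mem_singleton]
      constructor
      · rintro ⟨hZm, hle1, hle2⟩
        have : Y ⊔ Y' ≤ Z := sup_le hle1 hle2
        exact (eq_of_le_of_card_le this (by rw [mem_YDset.mp hZm, ← hcs])).symm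
      · rintro rfl
        exact ⟨mem_YDset.mpr hcs.symm, le_sup_left, le_sup_right⟩
    have hdown : (YDset m).filter (fun R => R ≤ Y ∧ R ≤ Y') = {Y ⊓ Y'} := by
      ext R
      simp only [Finset.mem_filter, Finset.mem_singleton]
      constructor
      · rintro ⟨hRm, hle1, hle2⟩
        exact eq_of_le_of_card_le (le_inf hle1 hle2) (by rw [mem_YDset.mp hRm]; omega)
      · rintro rfl
        exact ⟨mem_YDset.mpr (by omega), inf_le_left, inf_le_right⟩
    rw [hup, hdown, Finset.card_singleton, Finset.card_singleton]
  · -- card (Y ⊔ Y') > m + 2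
    have hup : (YDset (m+2)).filter (fun Z => Y ≤ Z ∧ Y' ≤ Z) = ∅ := by
      rw [Finset.eq_empty_iff_forall_notMem]
      rintro Z hZ
      rw [Finset.mem_filter] at hZ
      obtain ⟨hZm, hle1, hle2⟩ := hZ
      have := card_mono (sup_le hle1 hle2)
      rw [mem_YDset.mp hZm] at this
      omega
    have hdown : (YDset m).filter (fun R => R ≤ Y ∧ R ≤ Y') = ∅ := by
      rw [Finset.eq_empty_iff_forall_notMem]
      rintro R hR
      rw [Finset.mem_filter] at hR
      obtain ⟨hRm, hle1, hle2⟩ := hR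
      have := card_mono (le_inf hle1 hle2)
      rw [mem_YDset.mp hRm] at this
      omega
    rw [hup, hdown]

end Covers

section Generic
variable {α : Type*} [DecidableEq α] (s : Finset α) (c : α) (hc : c ∈ s)

/-- restrict an enumeration whose top is at `c` to `s.erase c` -/
def eraseTop (f : ↥s ≃ Fin s.card) (hf : (f ⟨c, hc⟩ : ℕ) = s.card - 1) :
    ↥(s.erase c) ≃ Fin (s.erase c).card where
  toFun x := ⟨(f ⟨x.1, Finset.mem_of_mem_erase x.2⟩ : ℕ), by
    have hcard := Finset.card_erase_of_mem hc
    have hlt := (f ⟨x.1, Finset.mem_of_mem_erase x.2⟩).2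
    have hne : f ⟨x.1, Finset.mem_of_mem_erase x.2⟩ ≠ f ⟨c, hc⟩ := fun he =>
      (Finset.ne_of_mem_erase x.2) (congrArg Subtype.val (f.injective he))
    have hv : (f ⟨x.1, Finset.mem_of_mem_erase x.2⟩ : ℕ) ≠ s.card - 1 := by
      rw [← hf]; exact fun hv => hne (Fin.ext hv)
    omega⟩
  invFun k := ⟨(f.symm ⟨k.1, by
      have h1 := k.2; have h2 := Finset.card_erase_of_mem hc; omega⟩ : ↥s).1, by
    refine Finset.mem_erase.mpr ⟨?_, (f.symm _).2⟩
    intro he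
    have h3 : f.symm ⟨k.1, _⟩ = ⟨c, hc⟩ := Subtype.ext he
    have h4 := congrArg f h3
    rw [Equiv.apply_symm_apply] at h4
    have hv : k.1 = s.card - 1 := by rw [← hf, ← h4]
    have h1 := k.2; have h2 := Finset.card_erase_of_mem hc; omega⟩
  left_inv x := by apply Subtype.ext; simp
  right_inv k := by apply Fin.ext; simp

lemma eraseTop_apply (f : ↥s ≃ Fin s.card) (hf : (f ⟨c, hc⟩ : ℕ) = s.card - 1)
    (x : ↥(s.erase c)) :
    ((eraseTop s c hc f hf) x : ℕ) = (f ⟨x.1, Finset.mem_of_mem_erase x.2⟩ : ℕ) := rfl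

/-- extend an enumeration of `s.erase c` by putting the top at `c` -/
def insertTop (g : ↥(s.erase c) ≃ Fin (s.erase c).card) : ↥s ≃ Fin s.card where
  toFun x := if hx : x.1 = c then ⟨s.card - 1, by
      have := Finset.card_pos.mpr ⟨c, hc⟩; omega⟩
    else ⟨(g ⟨x.1, Finset.mem_erase.mpr ⟨hx, x.2⟩⟩ : ℕ), by
      have h1 := (g ⟨x.1, Finset.mem_erase.mpr ⟨hx, x.2⟩⟩).2
      have h2 := Finset.card_erase_of_mem hc
      have := Finset.card_pos.mpr ⟨c, hc⟩; omega⟩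
  invFun k := if hk : (k : ℕ) = s.card - 1 then ⟨c, hc⟩
    else ⟨(g.symm ⟨k.1, by
        have h1 := k.2; have h2 := Finset.card_erase_of_mem hc; omega⟩).1,
      Finset.mem_of_mem_erase (g.symm _).2⟩
  left_inv x := by
    dsimp only
    by_cases hx : x.1 = c
    · rw [dif_pos hx]
      rw [dif_pos rfl]
      exact Subtype.ext hx.symm
    · rw [dif_neg hx]
      have h1 := (g ⟨x.1, Finset.mem_erase.mpr ⟨hx, x.2⟩⟩).2
      have h2 := Finset.card_erase_of_mem hc
      have := Finset.card_pos.mpr ⟨c, hc⟩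
      rw [dif_neg (by simp only; omega)]
      apply Subtype.ext
      simp
  right_inv k := by
    dsimp only
    by_cases hk : (k : ℕ) = s.card - 1
    · rw [dif_pos hk]
      rw [dif_pos rfl]
      exact Fin.ext hk.symm
    · rw [dif_neg hk]
      have hne : (g.symm ⟨k.1, by
          have h1 := k.2; have h2 := Finset.card_erase_of_mem hc; omega⟩).1 ≠ c :=
        Finset.ne_of_mem_erase (g.symm _).2
      rw [dif_neg hne]
      apply Fin.ext
      simp

lemma insertTop_apply_of_eq (g : ↥(s.erase c) ≃ Fin (s.erase c).card) (x : ↥s)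
    (hx : x.1 = c) : ((insertTop s c hc g) x : ℕ) = s.card - 1 := by
  simp [insertTop, dif_pos hx]

lemma insertTop_apply_of_ne (g : ↥(s.erase c) ≃ Fin (s.erase c).card) (x : ↥s)
    (hx : x.1 ≠ c) :
    ((insertTop s c hc g) x : ℕ) = (g ⟨x.1, Finset.mem_erase.mpr ⟨hx, x.2⟩⟩ : ℕ) := by
  simp [insertTop, dif_neg hx]

lemma insertTop_symm_last (g : ↥(s.erase c) ≃ Fin (s.erase c).card) (k : Fin s.card)
    (hk : (k : ℕ) = s.card - 1) : ((insertTop s c hc g).symm k).1 = c := by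
  have : (insertTop s c hc g).symm k = ⟨c, hc⟩ := by
    rw [Equiv.symm_apply_eq]
    apply Fin.ext
    rw [insertTop_apply_of_eq s c hc g ⟨c, hc⟩ rfl, hk]
  rw [this]

end Generic

section Branching

abbrev SYT (Y : YoungDiagram) :=
  {f : (↥Y.cells) ≃ Fin Y.cells.card //
    (∀ a b : Y.cells, (a : ℕ × ℕ).1 = (b : ℕ × ℕ).1 → (a : ℕ × ℕ).2 < (b : ℕ × ℕ).2 →
      f a < f b) ∧
    (∀ a b : Y.cells, (a : ℕ × ℕ).2 = (b : ℕ × ℕ).2 → (a : ℕ × ℕ).1 < (b : ℕ × ℕ).1 →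
      f a < f b)}

lemma sytCard_eq (Y : YoungDiagram) : sytCard Y = Fintype.card (SYT Y) := rfl

def lastFin (n : ℕ) (h : 0 < n) : Fin n := ⟨n - 1, by omega⟩

/-- the row index of the largest entry -/
def topIdx {Z : YoungDiagram} (hpos : 0 < Z.cells.card) (f : SYT Z) : ℕ :=
  ((f.1.symm (lastFin _ hpos) : ↥Z.cells) : ℕ × ℕ).1

lemma top_cell {Z : YoungDiagram} (hpos : 0 < Z.cells.card) (f : SYT Z) :
    (((f.1.symm (lastFin _ hpos)) : ↥Z.cells) : ℕ × ℕ) =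
      (topIdx hpos f, Z.rowLen (topIdx hpos f) - 1) ∧
    Z.rowLen (topIdx hpos f + 1) < Z.rowLen (topIdx hpos f) := by
  set cs := (f.1.symm (lastFin _ hpos) : ↥Z.cells) with hcs
  set c := (cs : ℕ × ℕ) with hcdef
  have hcZ : (c.1, c.2) ∈ Z := by
    have := cs.2
    rw [YoungDiagram.mem_cells] at this
    simpa [hcdef] using this
  have hlast : f.1 cs = lastFin _ hpos := by rw [hcs, Equiv.apply_symm_apply]
  have hmax : ∀ b : ↥Z.cells, ¬ f.1 cs < f.1 b := by
    intro b hb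
    rw [hlast, Fin.lt_def] at hb
    have := (f.1 b).2
    simp only [lastFin] at hb
    omega
  have hright : ((c.1, c.2 + 1) : ℕ × ℕ) ∉ Z := by
    intro hmem
    have hb : ((c.1, c.2 + 1) : ℕ × ℕ) ∈ Z.cells := by rwa [YoungDiagram.mem_cells]
    exact hmax ⟨_, hb⟩ (f.2.1 cs ⟨_, hb⟩ rfl (by simp [hcdef]))
  have hbelow : ((c.1 + 1, c.2) : ℕ × ℕ) ∉ Z := by
    intro hmem
    have hb : ((c.1 + 1, c.2) : ℕ × ℕ) ∈ Z.cells := by rwa [YoungDiagram.mem_cells]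
    exact hmax ⟨_, hb⟩ (f.2.2 cs ⟨_, hb⟩ rfl (by simp [hcdef]))
  have h1 : c.2 < Z.rowLen c.1 := YoungDiagram.mem_iff_lt_rowLen.mp hcZ
  have h2 : Z.rowLen c.1 ≤ c.2 + 1 := by
    by_contra hlt
    exact hright (YoungDiagram.mem_iff_lt_rowLen.mpr (by omega))
  have h3 : Z.rowLen (c.1 + 1) ≤ c.2 := by
    by_contra hlt
    exact hbelow (YoungDiagram.mem_iff_lt_rowLen.mpr (by omega))
  have hti : topIdx hpos f = c.1 := rfl
  constructor
  · rw [hti]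
    exact Prod.ext rfl (by omega)
  · rw [hti]; omega

lemma topIdx_mem_remIdx {Z : YoungDiagram} (hpos : 0 < Z.cells.card) (f : SYT Z) :
    topIdx hpos f ∈ remIdx Z :=
  mem_remIdx.mpr (top_cell hpos f).2

/-- the last cell of row i, as the canonical removable cell -/
def qcell (Z : YoungDiagram) (i : ℕ) : ℕ × ℕ := (i, Z.rowLen i - 1)

lemma qcell_mem {Z : YoungDiagram} {i : ℕ} (h : Z.rowLen (i+1) < Z.rowLen i) :
    qcell Z i ∈ Z.cells := by
  rw [YoungDiagram.mem_cells]
  exact YoungDiagram.mem_iff_lt_rowLen.mpr (by omega)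

lemma eraseC_cells {Z : YoungDiagram} {i : ℕ} (h : Z.rowLen (i+1) < Z.rowLen i) :
    (eraseC Z i h).cells = Z.cells.erase (qcell Z i) := rfl

lemma top_val {Z : YoungDiagram} (hpos : 0 < Z.cells.card) (f : SYT Z) {i : ℕ}
    (h : Z.rowLen (i+1) < Z.rowLen i) (hf : topIdx hpos f = i) :
    (f.1 ⟨qcell Z i, qcell_mem h⟩ : ℕ) = Z.cells.card - 1 := by
  have htc := (top_cell hpos f).1
  rw [hf] at htc
  have : (f.1.symm (lastFin _ hpos)) = ⟨qcell Z i, qcell_mem h⟩ := Subtype.ext htc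
  rw [← this, Equiv.apply_symm_apply]
  rfl

/-- restriction of a SYT of `Z` with top entry in row `i` to `Z` minus its corner -/
def restrictSYT {Z : YoungDiagram} {i : ℕ} (h : Z.rowLen (i+1) < Z.rowLen i)
    (hpos : 0 < Z.cells.card) (f : SYT Z) (hf : topIdx hpos f = i) :
    SYT (eraseC Z i h) :=
  ⟨eraseTop Z.cells (qcell Z i) (qcell_mem h) f.1 (top_val hpos f h hf), by
    constructor
    · intro a b h1 h2
      have := f.2.1 ⟨a.1, Finset.mem_of_mem_erase a.2⟩ ⟨b.1, Finset.mem_of_mem_erase b.2⟩ h1 h2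
      rw [Fin.lt_def] at this
      rw [Fin.lt_def]
      exact this
    · intro a b h1 h2
      have := f.2.2 ⟨a.1, Finset.mem_of_mem_erase a.2⟩ ⟨b.1, Finset.mem_of_mem_erase b.2⟩ h1 h2
      rw [Fin.lt_def] at this
      rw [Fin.lt_def]
      exact this⟩

/-- extension of a SYT of `Z` minus a corner to `Z` -/
def extendSYT {Z : YoungDiagram} {i : ℕ} (h : Z.rowLen (i+1) < Z.rowLen i)
    (g : SYT (eraseC Z i h)) : SYT Z :=
  ⟨insertTop Z.cells (qcell Z i) (qcell_mem h) g.1, by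
    have hcard := Finset.card_erase_of_mem (qcell_mem h)
    have hpos := Finset.card_pos.mpr ⟨_, qcell_mem h⟩
    constructor
    · intro a b h1 h2
      by_cases hb : b.1 = qcell Z i
      · have ha : a.1 ≠ qcell Z i := by
          intro ha
          rw [ha, hb] at h2
          omega
        rw [Fin.lt_def, insertTop_apply_of_ne Z.cells (qcell Z i) (qcell_mem h) g.1 a ha, insertTop_apply_of_eq Z.cells (qcell Z i) (qcell_mem h) g.1 b hb]
        have h5 : (↑(g.1 ⟨a.1, Finset.mem_erase.mpr ⟨ha, a.2⟩⟩) : ℕ) <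
            (Z.cells.erase (qcell Z i)).card := (g.1 ⟨a.1, Finset.mem_erase.mpr ⟨ha, a.2⟩⟩).2
        omega
      · by_cases ha : a.1 = qcell Z i
        · exfalso
          have hbZ : ((b : ℕ × ℕ).1, (b : ℕ × ℕ).2) ∈ Z := by
            rw [Prod.mk.eta]
            have := b.2; rwa [YoungDiagram.mem_cells] at this
          have hblt := YoungDiagram.mem_iff_lt_rowLen.mp hbZ
          have ha1 : (a : ℕ × ℕ).1 = i := congrArg Prod.fst ha
          have ha2 : (a : ℕ × ℕ).2 = Z.rowLen i - 1 := congrArg Prod.snd ha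
          rw [← h1, ha1] at hblt
          omega
        · rw [Fin.lt_def, insertTop_apply_of_ne Z.cells (qcell Z i) (qcell_mem h) g.1 a ha, insertTop_apply_of_ne Z.cells (qcell Z i) (qcell_mem h) g.1 b hb]
          have := g.2.1 ⟨a.1, Finset.mem_erase.mpr ⟨ha, a.2⟩⟩ ⟨b.1, Finset.mem_erase.mpr ⟨hb, b.2⟩⟩
            h1 h2
          rwa [Fin.lt_def] at this
    · intro a b h1 h2
      by_cases hb : b.1 = qcell Z i
      · have ha : a.1 ≠ qcell Z i := by
          intro ha
          rw [ha, hb] at h2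
          omega
        rw [Fin.lt_def, insertTop_apply_of_ne Z.cells (qcell Z i) (qcell_mem h) g.1 a ha, insertTop_apply_of_eq Z.cells (qcell Z i) (qcell_mem h) g.1 b hb]
        have h5 : (↑(g.1 ⟨a.1, Finset.mem_erase.mpr ⟨ha, a.2⟩⟩) : ℕ) <
            (Z.cells.erase (qcell Z i)).card := (g.1 ⟨a.1, Finset.mem_erase.mpr ⟨ha, a.2⟩⟩).2
        omega
      · by_cases ha : a.1 = qcell Z i
        · exfalso
          have hbZ : ((b : ℕ × ℕ).1, (b : ℕ × ℕ).2) ∈ Z := by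
            rw [Prod.mk.eta]
            have := b.2; rwa [YoungDiagram.mem_cells] at this
          have hblt := YoungDiagram.mem_iff_lt_rowLen.mp hbZ
          have ha1 : (a : ℕ × ℕ).1 = i := congrArg Prod.fst ha
          have ha2 : (a : ℕ × ℕ).2 = Z.rowLen i - 1 := congrArg Prod.snd ha
          have hanti : Z.rowLen (b : ℕ × ℕ).1 ≤ Z.rowLen (i+1) :=
            Z.rowLen_anti _ _ (by omega)
          rw [← h1, ha2] at hblt
          omega
        · rw [Fin.lt_def, insertTop_apply_of_ne Z.cells (qcell Z i) (qcell_mem h) g.1 a ha, insertTop_apply_of_ne Z.cells (qcell Z i) (qcell_mem h) g.1 b hb]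
          have := g.2.2 ⟨a.1, Finset.mem_erase.mpr ⟨ha, a.2⟩⟩ ⟨b.1, Finset.mem_erase.mpr ⟨hb, b.2⟩⟩
            h1 h2
          rwa [Fin.lt_def] at this⟩

lemma topIdx_extendSYT {Z : YoungDiagram} {i : ℕ} (h : Z.rowLen (i+1) < Z.rowLen i)
    (g : SYT (eraseC Z i h)) (hpos : 0 < Z.cells.card) :
    topIdx hpos (extendSYT h g) = i := by
  have := insertTop_symm_last Z.cells (qcell Z i) (qcell_mem h) g.1 (lastFin _ hpos) rfl
  rw [topIdx]
  show ((insertTop Z.cells (qcell Z i) (qcell_mem h) g.1).symm (lastFin _ hpos)).1.1 = i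
  rw [this]
  rfl

lemma restrict_extendSYT {Z : YoungDiagram} {i : ℕ} (h : Z.rowLen (i+1) < Z.rowLen i)
    (g : SYT (eraseC Z i h)) (hpos : 0 < Z.cells.card) :
    restrictSYT h hpos (extendSYT h g) (topIdx_extendSYT h g hpos) = g := by
  apply Subtype.ext
  apply Equiv.ext
  intro x
  apply Fin.ext
  have hx : x.1 ≠ qcell Z i := by
    have h6 : x.1 ∈ Z.cells.erase (qcell Z i) := x.2
    exact Finset.ne_of_mem_erase h6
  show ((insertTop Z.cells (qcell Z i) (qcell_mem h) g.1)
      ⟨x.1, Finset.mem_of_mem_erase x.2⟩ : ℕ) = (g.1 x : ℕ)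
  rw [insertTop_apply_of_ne Z.cells (qcell Z i) (qcell_mem h) g.1
    ⟨x.1, Finset.mem_of_mem_erase x.2⟩ hx]
  congr 1

lemma extend_restrictSYT {Z : YoungDiagram} {i : ℕ} (h : Z.rowLen (i+1) < Z.rowLen i)
    (hpos : 0 < Z.cells.card) (f : SYT Z) (hf : topIdx hpos f = i) :
    extendSYT h (restrictSYT h hpos f hf) = f := by
  apply Subtype.ext
  apply Equiv.ext
  intro x
  apply Fin.ext
  by_cases hx : x.1 = qcell Z i
  · show ((insertTop Z.cells (qcell Z i) (qcell_mem h) (restrictSYT h hpos f hf).1) x : ℕ) =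
      (f.1 x : ℕ)
    rw [insertTop_apply_of_eq Z.cells (qcell Z i) (qcell_mem h) (restrictSYT h hpos f hf).1 x hx]
    have hxe : x = ⟨qcell Z i, qcell_mem h⟩ := Subtype.ext hx
    rw [hxe]
    exact (top_val hpos f h hf).symm
  · show ((insertTop Z.cells (qcell Z i) (qcell_mem h) (restrictSYT h hpos f hf).1) x : ℕ) =
      (f.1 x : ℕ)
    rw [insertTop_apply_of_ne Z.cells (qcell Z i) (qcell_mem h) (restrictSYT h hpos f hf).1 x hx]
    show (f.1 ⟨x.1, _⟩ : ℕ) = (f.1 x : ℕ)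
    congr 1

/-- the fiber of SYT of `Z` with top in row `i` is equivalent to SYT of the erased diagram -/
def fiberEquiv {Z : YoungDiagram} {i : ℕ} (h : Z.rowLen (i+1) < Z.rowLen i)
    (hpos : 0 < Z.cells.card) :
    {f : SYT Z // topIdx hpos f = i} ≃ SYT (eraseC Z i h) where
  toFun fp := restrictSYT h hpos fp.1 fp.2
  invFun g := ⟨extendSYT h g, topIdx_extendSYT h g hpos⟩
  left_inv fp := Subtype.ext (extend_restrictSYT h hpos fp.1 fp.2)
  right_inv g := restrict_extendSYT h g hpos

lemma sytCard_decomp (Z : YoungDiagram) (hpos : 0 < Z.cells.card) :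
    sytCard Z = ∑ ii ∈ (remIdx Z).attach, sytCard (eraseC Z ii.1 (mem_remIdx.mp ii.2)) := by
  classical
  rw [sytCard_eq]
  rw [show Fintype.card (SYT Z) = (Finset.univ : Finset (SYT Z)).card from rfl]
  rw [Finset.card_eq_sum_card_fiberwise
    (f := fun f : SYT Z => (⟨topIdx hpos f, topIdx_mem_remIdx hpos f⟩ : ↥(remIdx Z)))
    (t := (remIdx Z).attach) (fun f _ => Finset.mem_attach _ _)]
  apply Finset.sum_congr rfl
  intro ii _
  have hcond : Z.rowLen (ii.1 + 1) < Z.rowLen ii.1 := mem_remIdx.mp ii.2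
  rw [sytCard_eq, ← Fintype.card_congr (fiberEquiv hcond hpos)]
  rw [Fintype.card_subtype]
  congr 1
  apply Finset.filter_congr
  intro f _
  constructor
  · intro hx
    exact congrArg Subtype.val hx
  · intro hx
    exact Subtype.ext hx

lemma branching {Z : YoungDiagram} {m : ℕ} (hZ : Z.card = m+1) :
    sytCard Z = ∑ R ∈ (YDset m).filter (fun R => R ≤ Z), sytCard R := by
  rw [sum_below Z hZ]
  exact sytCard_decomp Z (by show 0 < Z.card; omega)

end Branching

section Frobenius

lemma addCell_congr {Y : YoungDiagram} {i i' : ℕ} {h h'} (hii : i = i') :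
    addCell Y i h = addCell Y i' h' := by subst hii; rfl

lemma card_eq_zero_iff_bot {Y : YoungDiagram} : Y.card = 0 ↔ Y = ⊥ := by
  constructor
  · intro h
    apply YoungDiagram.ext
    rw [YoungDiagram.cells_bot]
    exact Finset.card_eq_zero.mp h
  · rintro rfl
    rw [show (⊥ : YoungDiagram).card = (⊥ : YoungDiagram).cells.card from rfl,
      YoungDiagram.cells_bot, Finset.card_empty]

lemma YDset_zero : YDset 0 = {⊥} := by
  ext Y
  rw [mem_YDset, Finset.mem_singleton, card_eq_zero_iff_bot]

lemma rowLen_bot (j : ℕ) : (⊥ : YoungDiagram).rowLen j = 0 :=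
  rowLen_eq_zero (by simp)

lemma addIdx_bot : addIdx ⊥ = {0} := by
  ext i
  rw [mem_addIdx, Finset.mem_singleton]
  simp [rowLen_bot]

lemma sytCard_bot : sytCard (⊥ : YoungDiagram) = 1 := by
  rw [sytCard_eq]
  haveI he : IsEmpty (↥(⊥ : YoungDiagram).cells) :=
    Finset.isEmpty_coe_sort.mpr YoungDiagram.cells_bot
  haveI he2 : IsEmpty (Fin (⊥ : YoungDiagram).cells.card) := by
    rw [YoungDiagram.cells_bot, Finset.card_empty]
    infer_instance
  refine Fintype.card_eq_one_iff.mpr ⟨⟨Equiv.equivOfIsEmpty _ _, ?_, ?_⟩, ?_⟩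
  · intro a; exact (he.false a).elim
  · intro a; exact (he.false a).elim
  · intro y
    apply Subtype.ext
    apply Equiv.ext
    intro x
    exact (he.false x).elim

lemma DLsucc (m : ℕ)
    (ih : ∀ Y : YoungDiagram, Y.card = m →
      ∑ Z ∈ (YDset (m+1)).filter (fun Z => Y ≤ Z), sytCard Z = (m+1) * sytCard Y) :
    ∀ Y : YoungDiagram, Y.card = m+1 →
      ∑ Z ∈ (YDset (m+2)).filter (fun Z => Y ≤ Z), sytCard Z = (m+2) * sytCard Y := by
  intro Y hY
  have hbr := branching (Z := Y) (m := m) hY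
  calc ∑ Z ∈ (YDset (m+2)).filter (fun Z => Y ≤ Z), sytCard Z
      = ∑ Z ∈ (YDset (m+2)).filter (fun Z => Y ≤ Z),
          ∑ Y' ∈ (YDset (m+1)).filter (fun Y' => Y' ≤ Z), sytCard Y' := by
        refine Finset.sum_congr rfl (fun Z hZ => ?_)
        exact branching (mem_YDset.mp (Finset.mem_filter.mp hZ).1)
    _ = ∑ Y' ∈ YDset (m+1),
          ∑ Z ∈ (YDset (m+2)).filter (fun Z => Y ≤ Z ∧ Y' ≤ Z), sytCard Y' := by
        refine Finset.sum_comm' ?_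
        intro Z Y'
        simp only [Finset.mem_filter]
        tauto
    _ = ∑ Y' ∈ YDset (m+1),
          ((YDset (m+2)).filter (fun Z => Y ≤ Z ∧ Y' ≤ Z)).card * sytCard Y' := by
        refine Finset.sum_congr rfl (fun Y' _ => ?_)
        rw [Finset.sum_const, smul_eq_mul]
    _ = ∑ Y' ∈ YDset (m+1),
          (((YDset m).filter (fun R => R ≤ Y ∧ R ≤ Y')).card
            + if Y' = Y then 1 else 0) * sytCard Y' := by
        refine Finset.sum_congr rfl (fun Y' hY' => ?_)
        congr 1
        by_cases hYY : Y' = Y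
        · subst hYY
          rw [if_pos rfl]
          have e1 : (YDset (m+2)).filter (fun Z => Y' ≤ Z ∧ Y' ≤ Z)
              = (YDset (m+2)).filter (fun Z => Y' ≤ Z) := by
            apply Finset.filter_congr; intro Z _; tauto
          have e2 : (YDset m).filter (fun R => R ≤ Y' ∧ R ≤ Y')
              = (YDset m).filter (fun R => R ≤ Y') := by
            apply Finset.filter_congr; intro R _; tauto
          rw [e1, e2, count_above_below Y' hY]
        · rw [if_neg hYY, Nat.add_zero]
          exact cross_count hY (mem_YDset.mp hY') (fun h => hYY h.symm)
    _ = (∑ Y' ∈ YDset (m+1),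
          ((YDset m).filter (fun R => R ≤ Y ∧ R ≤ Y')).card * sytCard Y') + sytCard Y := by
        have hsplit : ∀ Y' ∈ YDset (m+1),
            (((YDset m).filter (fun R => R ≤ Y ∧ R ≤ Y')).card + if Y' = Y then 1 else 0)
              * sytCard Y'
            = ((YDset m).filter (fun R => R ≤ Y ∧ R ≤ Y')).card * sytCard Y'
              + (if Y' = Y then sytCard Y' else 0) := by
          intro Y' _
          rw [add_mul, ite_mul, one_mul, zero_mul]
        rw [Finset.sum_congr rfl hsplit, Finset.sum_add_distrib,
          Finset.sum_ite_eq' (YDset (m+1)) Y (fun Y' => sytCard Y'),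
          if_pos (mem_YDset.mpr hY)]
    _ = (∑ R ∈ (YDset m).filter (fun R => R ≤ Y),
          ∑ Y' ∈ (YDset (m+1)).filter (fun Y' => R ≤ Y'), sytCard Y') + sytCard Y := by
        refine congrArg (· + sytCard Y) ?_
        have hstep : ∀ Y' ∈ YDset (m+1),
            ((YDset m).filter (fun R => R ≤ Y ∧ R ≤ Y')).card * sytCard Y'
              = ∑ R ∈ (YDset m).filter (fun R => R ≤ Y ∧ R ≤ Y'), sytCard Y' := by
          intro Y' _
          rw [Finset.sum_const, smul_eq_mul]
        rw [Finset.sum_congr rfl hstep]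
        refine Finset.sum_comm' ?_
        intro Y' R
        simp only [Finset.mem_filter]
        tauto
    _ = ((m+1) * sytCard Y) + sytCard Y := by
        refine congrArg (· + sytCard Y) ?_
        have h1 : ∀ R ∈ (YDset m).filter (fun R => R ≤ Y),
            ∑ Y' ∈ (YDset (m+1)).filter (fun Y' => R ≤ Y'), sytCard Y'
              = (m+1) * sytCard R :=
          fun R hR => ih R (mem_YDset.mp (Finset.mem_filter.mp hR).1)
        rw [Finset.sum_congr rfl h1]
        rw [← Finset.mul_sum]
        rw [← hbr]
    _ = (m+1+1) * sytCard Y := by ring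


lemma DL : ∀ m : ℕ, ∀ Y : YoungDiagram, Y.card = m →
    ∑ Z ∈ (YDset (m+1)).filter (fun Z => Y ≤ Z), sytCard Z = (m+1) * sytCard Y := by
  intro m
  induction m with
  | zero =>
    intro Y hY
    obtain rfl : Y = ⊥ := card_eq_zero_iff_bot.mp hY
    rw [sum_above ⊥ hY]
    have h1 : ∀ i : ↥(addIdx ⊥),
        sytCard (addCell ⊥ i.1 (mem_addIdx.mp i.2)) = sytCard ⊥ := by
      intro i
      have hi0 : i.1 = 0 := by
        rcases mem_addIdx.mp i.2 with h | h
        · exact h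
        · simp [rowLen_bot] at h
      rw [addCell_congr hi0 (h' := Or.inl rfl)]
      have hc : (addCell ⊥ 0 (Or.inl rfl)).card = 0 + 1 := by
        rw [addCell_card, card_eq_zero_iff_bot.mpr rfl]
      rw [branching hc, YDset_zero]
      rw [Finset.filter_singleton]
      rw [if_pos bot_le, Finset.sum_singleton]
    rw [Finset.sum_congr rfl (fun i _ => h1 i), Finset.sum_const, Finset.card_attach,
      addIdx_bot, Finset.card_singleton, one_smul, sytCard_bot]
  | succ m ih =>
    exact fun Y hY => DLsucc m ih Y hY

lemma Frobenius : ∀ m : ℕ, ∑ Y ∈ YDset m, sytCard Y ^ 2 = m.factorial := by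
  intro m
  induction m with
  | zero =>
    rw [YDset_zero, Finset.sum_singleton, sytCard_bot]
    rfl
  | succ m ih =>
    calc ∑ Z ∈ YDset (m+1), sytCard Z ^ 2
        = ∑ Z ∈ YDset (m+1), ∑ R ∈ (YDset m).filter (fun R => R ≤ Z),
            sytCard Z * sytCard R := by
          refine Finset.sum_congr rfl (fun Z hZ => ?_)
          rw [← Finset.mul_sum, ← branching (mem_YDset.mp hZ), sq]
      _ = ∑ R ∈ YDset m, ∑ Z ∈ (YDset (m+1)).filter (fun Z => R ≤ Z),
            sytCard Z * sytCard R := by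
          refine Finset.sum_comm' ?_
          intro Z R
          simp only [Finset.mem_filter]
          tauto
      _ = ∑ R ∈ YDset m, ((m+1) * sytCard R) * sytCard R := by
          refine Finset.sum_congr rfl (fun R hR => ?_)
          rw [← Finset.sum_mul, DL m R (mem_YDset.mp hR)]
      _ = (m+1) * ∑ R ∈ YDset m, sytCard R ^ 2 := by
          rw [Finset.mul_sum]
          refine Finset.sum_congr rfl (fun R _ => ?_)
          ring
      _ = (m+1) * m.factorial := by rw [ih]
      _ = (m+1).factorial := (Nat.factorial_succ m).symm

end Frobenius

section Tail2

/-- the diagram minus its first two rows -/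
def tail2 (Y : YoungDiagram) : YoungDiagram where
  cells := (Y.cells.filter (fun c => 2 ≤ c.1)).image (fun c => (c.1 - 2, c.2))
  isLowerSet := by
    rintro ⟨c1, c2⟩ ⟨a1, a2⟩ ⟨(ha1 : a1 ≤ c1), (ha2 : a2 ≤ c2)⟩ hc
    simp only [Finset.coe_image, Set.mem_image, Finset.mem_coe, Finset.mem_filter] at hc ⊢
    obtain ⟨⟨p1, p2⟩, ⟨hpY, hp2⟩, heq⟩ := hc
    have he1 : p1 - 2 = c1 := congrArg Prod.fst heq
    have he2 : p2 = c2 := congrArg Prod.snd heq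
    refine ⟨(a1 + 2, a2), ⟨?_, by omega⟩, by simp⟩
    have hpY' : ((p1, p2) : ℕ × ℕ) ∈ Y := hpY
    have hmem : ((a1 + 2, a2) : ℕ × ℕ) ∈ Y :=
      Y.up_left_mem (i2 := p1) (j2 := p2) (by omega) (by omega) hpY'
    exact hmem

lemma mem_tail2 {Y : YoungDiagram} {i j : ℕ} : (i, j) ∈ tail2 Y ↔ (i + 2, j) ∈ Y := by
  show (i, j) ∈ (Y.cells.filter (fun c => 2 ≤ c.1)).image (fun c => (c.1 - 2, c.2)) ↔ _
  rw [Finset.mem_image]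
  constructor
  · rintro ⟨⟨p1, p2⟩, hp, heq⟩
    rw [Finset.mem_filter] at hp
    have he1 : p1 - 2 = i := congrArg Prod.fst heq
    have he2 : p2 = j := congrArg Prod.snd heq
    have : p1 = i + 2 := by have := hp.2; omega
    rw [← this, ← he2]
    rw [← YoungDiagram.mem_cells]
    exact hp.1
  · intro hmem
    exact ⟨(i + 2, j), Finset.mem_filter.mpr ⟨by rwa [YoungDiagram.mem_cells], by omega⟩,
      by simp⟩

lemma rowLen_le_iff {Y : YoungDiagram} {i r : ℕ} : Y.rowLen i ≤ r ↔ (i, r) ∉ Y := by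
  rw [YoungDiagram.mem_iff_lt_rowLen]
  omega

lemma rowLen_tail2 (Y : YoungDiagram) (i : ℕ) : (tail2 Y).rowLen i = Y.rowLen (i + 2) := by
  apply le_antisymm
  · rw [rowLen_le_iff]
    intro h
    have h2 := YoungDiagram.mem_iff_lt_rowLen.mp (mem_tail2.mp h)
    omega
  · rw [rowLen_le_iff]
    intro h
    have h2 := YoungDiagram.mem_iff_lt_rowLen.mp (mem_tail2.mpr h)
    omega

lemma row_card {Y : YoungDiagram} (i : ℕ) :
    (Y.cells.filter (fun c => c.1 = i)).card = Y.rowLen i := by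
  rw [Y.rowLen_eq_card]
  rfl

lemma card_tail2 (Y : YoungDiagram) :
    Y.card = Y.rowLen 0 + Y.rowLen 1 + (tail2 Y).card := by
  have himg : (tail2 Y).card = (Y.cells.filter (fun c => 2 ≤ c.1)).card := by
    show ((Y.cells.filter (fun c => 2 ≤ c.1)).image (fun c => (c.1 - 2, c.2))).card = _
    apply Finset.card_image_of_injOn
    rintro ⟨p1, p2⟩ hp ⟨q1, q2⟩ hq heq
    rw [Finset.mem_coe, Finset.mem_filter] at hp hq
    have h1 : p1 - 2 = q1 - 2 := congrArg Prod.fst heq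
    have h2 : p2 = q2 := congrArg Prod.snd heq
    have := hp.2; have := hq.2
    exact Prod.ext (by omega) h2
  have e0 := Finset.card_filter_add_card_filter_not
    (s := Y.cells) (p := fun c => c.1 = 0)
  have e1 := Finset.card_filter_add_card_filter_not
    (s := Y.cells.filter (fun c => ¬ c.1 = 0)) (p := fun c => c.1 = 1)
  rw [Finset.filter_filter, Finset.filter_filter] at e1
  have ea : Y.cells.filter (fun c => ¬ c.1 = 0 ∧ c.1 = 1)
      = Y.cells.filter (fun c => c.1 = 1) := by
    apply Finset.filter_congr; intro c _; constructor
    · tauto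
    · intro h; omega
  have eb : Y.cells.filter (fun c => ¬ c.1 = 0 ∧ ¬ c.1 = 1)
      = Y.cells.filter (fun c => 2 ≤ c.1) := by
    apply Finset.filter_congr; intro c _; constructor
    · intro h; omega
    · intro h; omega
  rw [ea, eb] at e1
  rw [himg]
  have hr0 := row_card (Y := Y) 0
  have hr1 := row_card (Y := Y) 1
  show Y.cells.card = _
  omega

lemma tail2_ext {Y Y' : YoungDiagram} (h0 : Y.rowLen 0 = Y'.rowLen 0)
    (h1 : Y.rowLen 1 = Y'.rowLen 1) (ht : tail2 Y = tail2 Y') : Y = Y' := by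
  have hrow : ∀ i, Y.rowLen i = Y'.rowLen i := by
    intro i
    match i with
    | 0 => exact h0
    | 1 => exact h1
    | (k+2) =>
      rw [← rowLen_tail2 Y k, ← rowLen_tail2 Y' k, ht]
  apply YoungDiagram.ext
  ext ⟨i, j⟩
  show (i, j) ∈ Y ↔ (i, j) ∈ Y'
  rw [YoungDiagram.mem_iff_lt_rowLen, YoungDiagram.mem_iff_lt_rowLen, hrow i]

end Tail2

section Split

variable {Y : YoungDiagram}

/-- positions (values) of entries in row `r` -/
def rowSet (Y : YoungDiagram) (f : SYT Y) (r : ℕ) : Finset (Fin Y.cells.card) :=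
  Finset.univ.filter (fun k => ((f.1.symm k : ↥Y.cells) : ℕ × ℕ).1 = r)

/-- positions (values) of entries in rows `≥ 2` -/
def sSet (Y : YoungDiagram) (f : SYT Y) : Finset (Fin Y.cells.card) :=
  Finset.univ.filter (fun k => 2 ≤ ((f.1.symm k : ↥Y.cells) : ℕ × ℕ).1)

lemma mem_rowSet {f : SYT Y} {r : ℕ} {k : Fin Y.cells.card} :
    k ∈ rowSet Y f r ↔ ((f.1.symm k : ↥Y.cells) : ℕ × ℕ).1 = r := by
  simp [rowSet]

lemma mem_sSet {f : SYT Y} {k : Fin Y.cells.card} :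
    k ∈ sSet Y f ↔ 2 ≤ ((f.1.symm k : ↥Y.cells) : ℕ × ℕ).1 := by
  simp [sSet]

lemma apply_mem_rowSet {f : SYT Y} {r : ℕ} {c : ↥Y.cells} :
    f.1 c ∈ rowSet Y f r ↔ ((c : ℕ × ℕ)).1 = r := by
  rw [mem_rowSet, Equiv.symm_apply_apply]

lemma apply_mem_sSet {f : SYT Y} {c : ↥Y.cells} :
    f.1 c ∈ sSet Y f ↔ 2 ≤ ((c : ℕ × ℕ)).1 := by
  rw [mem_sSet, Equiv.symm_apply_apply]

lemma card_rowSet (f : SYT Y) (r : ℕ) : (rowSet Y f r).card = Y.rowLen r := by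
  rw [Y.rowLen_eq_card]
  refine Finset.card_bij' (fun k _ => ((f.1.symm k : ↥Y.cells) : ℕ × ℕ))
    (fun c hc => f.1 ⟨c, by rw [YoungDiagram.mem_cells]; exact (YoungDiagram.mem_row_iff.mp hc).1⟩)
    ?_ ?_ ?_ ?_
  · intro k hk
    rw [YoungDiagram.mem_row_iff]
    have h1 := (f.1.symm k).2
    rw [YoungDiagram.mem_cells] at h1
    exact ⟨h1, mem_rowSet.mp hk⟩
  · intro c hc
    rw [apply_mem_rowSet]
    exact (YoungDiagram.mem_row_iff.mp hc).2
  · intro k hk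
    simp
  · intro c hc
    rw [Equiv.symm_apply_apply]

lemma card_sSet (f : SYT Y) : (sSet Y f).card = (tail2 Y).cells.card := by
  refine Finset.card_bij' (fun k _ =>
      (((f.1.symm k : ↥Y.cells) : ℕ × ℕ).1 - 2, ((f.1.symm k : ↥Y.cells) : ℕ × ℕ).2))
    (fun c hc => f.1 ⟨(c.1 + 2, c.2), by
      rw [YoungDiagram.mem_cells]
      rw [YoungDiagram.mem_cells] at hc
      exact mem_tail2.mp hc⟩)
    ?_ ?_ ?_ ?_
  · intro k hk
    have h2 := mem_sSet.mp hk
    have h1 := (f.1.symm k).2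
    rw [YoungDiagram.mem_cells] at h1
    rw [YoungDiagram.mem_cells, mem_tail2]
    have : (((f.1.symm k : ↥Y.cells) : ℕ × ℕ).1 - 2 + 2) = ((f.1.symm k : ↥Y.cells) : ℕ × ℕ).1 := by omega
    rw [this, Prod.mk.eta]
    exact h1
  · intro c hc
    rw [apply_mem_sSet]
    simp
  · intro k hk
    have h2 := mem_sSet.mp hk
    dsimp only
    rw [Equiv.apply_eq_iff_eq_symm_apply]
    exact Subtype.ext (Prod.ext (by show ((f.1.symm k : ↥Y.cells) : ℕ × ℕ).1 - 2 + 2 = _; omega) rfl)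
  · intro c hc
    rw [Equiv.symm_apply_apply]
    show ((c.1 + 2 - 2, c.2) : ℕ × ℕ) = c
    exact Prod.ext (by omega) rfl

lemma card_compl_rowSet0 (f : SYT Y) :
    ((rowSet Y f 0)ᶜ).card = Y.cells.card - Y.rowLen 0 := by
  rw [Finset.card_compl, card_rowSet, Fintype.card_fin]

/-- second component: row-1 positions re-indexed inside the complement of row-0 positions -/
def compB (f : SYT Y) : Finset (Fin (Y.cells.card - Y.rowLen 0)) :=
  Finset.univ.filter (fun j =>
    (((rowSet Y f 0)ᶜ.orderIsoOfFin (card_compl_rowSet0 f)) j : Fin Y.cells.card)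
      ∈ rowSet Y f 1)

lemma rowSet_one_subset_compl (f : SYT Y) {k : Fin Y.cells.card} (hk : k ∈ rowSet Y f 1) :
    k ∈ (rowSet Y f 0)ᶜ := by
  rw [Finset.mem_compl, mem_rowSet]
  rw [mem_rowSet] at hk
  omega

lemma card_compB (f : SYT Y) : (compB f).card = Y.rowLen 1 := by
  rw [← card_rowSet f 1]
  refine Finset.card_bij'
    (fun j _ => (((rowSet Y f 0)ᶜ.orderIsoOfFin (card_compl_rowSet0 f)) j : Fin Y.cells.card))
    (fun k hk => ((rowSet Y f 0)ᶜ.orderIsoOfFin (card_compl_rowSet0 f)).symm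
      ⟨k, rowSet_one_subset_compl f hk⟩) ?_ ?_ ?_ ?_
  · intro j hj
    exact (Finset.mem_filter.mp hj).2
  · intro k hk
    rw [compB, Finset.mem_filter]
    refine ⟨Finset.mem_univ _, ?_⟩
    rw [OrderIso.apply_symm_apply]
    exact hk
  · intro j hj
    exact ((rowSet Y f 0)ᶜ.orderIsoOfFin (card_compl_rowSet0 f)).symm_apply_apply j
  · intro k hk
    rw [OrderIso.apply_symm_apply]

lemma shift_mem_cells {x : ℕ × ℕ} (hx : x ∈ (tail2 Y).cells) :
    ((x.1 + 2, x.2) : ℕ × ℕ) ∈ Y.cells := by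
  rw [YoungDiagram.mem_cells] at hx ⊢
  exact mem_tail2.mp hx

/-- shift a cell of the tail down into the original diagram -/
def shiftCell (x : ↥(tail2 Y).cells) : ↥Y.cells :=
  ⟨((x : ℕ × ℕ).1 + 2, (x : ℕ × ℕ).2), shift_mem_cells x.2⟩

lemma apply_shift_mem_sSet (f : SYT Y) (x : ↥(tail2 Y).cells) :
    f.1 (shiftCell x) ∈ sSet Y f := by
  rw [apply_mem_sSet]
  show 2 ≤ (x : ℕ × ℕ).1 + 2
  omega

lemma down_mem {c : ℕ × ℕ} (hc : c ∈ Y.cells) (h2 : 2 ≤ c.1) :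
    ((c.1 - 2, c.2) : ℕ × ℕ) ∈ (tail2 Y).cells := by
  rw [YoungDiagram.mem_cells] at hc ⊢
  refine mem_tail2.mpr ?_
  have heq : ((c.1 - 2 + 2, c.2) : ℕ × ℕ) = c := Prod.ext (by omega) rfl
  rw [heq]
  exact hc

/-- the enumeration of the tail positions -/
def sIso (f : SYT Y) : Fin (tail2 Y).cells.card ≃o ↥(sSet Y f) :=
  (sSet Y f).orderIsoOfFin (card_sSet f)

/-- cells of the tail correspond to tail positions -/
def e1 (f : SYT Y) : ↥(tail2 Y).cells ≃ ↥(sSet Y f) where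
  toFun x := ⟨f.1 (shiftCell x), apply_shift_mem_sSet f x⟩
  invFun k := ⟨(((f.1.symm k.1 : ↥Y.cells) : ℕ × ℕ).1 - 2,
      ((f.1.symm k.1 : ↥Y.cells) : ℕ × ℕ).2),
    down_mem (f.1.symm k.1).2 (mem_sSet.mp k.2)⟩
  left_inv x := by
    apply Subtype.ext
    dsimp only
    rw [Equiv.symm_apply_apply]
    show (((shiftCell x : ↥Y.cells) : ℕ × ℕ).1 - 2, ((shiftCell x : ↥Y.cells) : ℕ × ℕ).2)
      = (x : ℕ × ℕ)
    exact Prod.ext (by show (x : ℕ × ℕ).1 + 2 - 2 = (x : ℕ × ℕ).1; omega) rfl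
  right_inv k := by
    apply Subtype.ext
    dsimp only
    have h2 := mem_sSet.mp k.2
    have hcell : shiftCell (⟨(((f.1.symm k.1 : ↥Y.cells) : ℕ × ℕ).1 - 2,
        ((f.1.symm k.1 : ↥Y.cells) : ℕ × ℕ).2),
        down_mem (f.1.symm k.1).2 (mem_sSet.mp k.2)⟩ : ↥(tail2 Y).cells)
        = f.1.symm k.1 := by
      apply Subtype.ext
      show ((((f.1.symm k.1 : ↥Y.cells) : ℕ × ℕ).1 - 2) + 2,
        ((f.1.symm k.1 : ↥Y.cells) : ℕ × ℕ).2) = ((f.1.symm k.1 : ↥Y.cells) : ℕ × ℕ)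
      exact Prod.ext (by omega) rfl
    rw [hcell, Equiv.apply_symm_apply]

/-- third component of the injection: the induced tableau on the tail -/
def compG (f : SYT Y) : SYT (tail2 Y) :=
  ⟨(e1 f).trans (sIso f).symm.toEquiv, by
    constructor
    · intro a b h1 h2
      show (sIso f).symm (e1 f a) < (sIso f).symm (e1 f b)
      rw [OrderIso.lt_iff_lt]
      show (⟨f.1 (shiftCell a), _⟩ : ↥(sSet Y f)) < ⟨f.1 (shiftCell b), _⟩
      rw [Subtype.mk_lt_mk]
      exact f.2.1 (shiftCell a) (shiftCell b)
        (by show (a : ℕ × ℕ).1 + 2 = (b : ℕ × ℕ).1 + 2; omega) h2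
    · intro a b h1 h2
      show (sIso f).symm (e1 f a) < (sIso f).symm (e1 f b)
      rw [OrderIso.lt_iff_lt]
      show (⟨f.1 (shiftCell a), _⟩ : ↥(sSet Y f)) < ⟨f.1 (shiftCell b), _⟩
      rw [Subtype.mk_lt_mk]
      exact f.2.2 (shiftCell a) (shiftCell b) h1
        (by show (a : ℕ × ℕ).1 + 2 < (b : ℕ × ℕ).1 + 2; omega)⟩

lemma compG_spec (f : SYT Y) (x : ↥(tail2 Y).cells) :
    (sIso f ((compG f).1 x) : Fin Y.cells.card) = f.1 (shiftCell x) := by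
  show ((sIso f ((sIso f).symm (e1 f x))) : Fin Y.cells.card) = _
  rw [OrderIso.apply_symm_apply]
  rfl

end Split
section SplitInj

variable {Y : YoungDiagram}

lemma orderIsoOfFin_val_congr {α : Type*} [LinearOrder α] {s t : Finset α} (hst : s = t)
    {k : ℕ} (hs : s.card = k) (ht : t.card = k) (j : Fin k) :
    ((s.orderIsoOfFin hs j : α)) = (t.orderIsoOfFin ht j : α) := by subst hst; rfl

lemma orderEmbOfFin_val_congr {α : Type*} [LinearOrder α] {s t : Finset α} (hst : s = t)
    {k : ℕ} (hs : s.card = k) (ht : t.card = k) (j : Fin k) :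
    s.orderEmbOfFin hs j = t.orderEmbOfFin ht j := by subst hst; rfl

/-- the entries of row `r` in order -/
def rowMap (f : SYT Y) (r : ℕ) : Fin (Y.rowLen r) → Fin Y.cells.card :=
  fun j => f.1 ⟨(r, j.1), by
    rw [YoungDiagram.mem_cells]; exact YoungDiagram.mem_iff_lt_rowLen.mpr j.2⟩

lemma rowMap_strictMono (f : SYT Y) (r : ℕ) : StrictMono (rowMap f r) := by
  intro j j' hj
  exact f.2.1 _ _ rfl hj

lemma rowMap_mem (f : SYT Y) (r : ℕ) (j : Fin (Y.rowLen r)) :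
    rowMap f r j ∈ rowSet Y f r :=
  apply_mem_rowSet.mpr rfl

lemma rowMap_eq (f : SYT Y) (r : ℕ) :
    rowMap f r = (rowSet Y f r).orderEmbOfFin (card_rowSet f r) :=
  Finset.orderEmbOfFin_unique _ (fun j => rowMap_mem f r j) (rowMap_strictMono f r)

lemma rowSet_one_eq_image (f : SYT Y) :
    rowSet Y f 1 = (compB f).image
      (fun j => (((rowSet Y f 0)ᶜ.orderIsoOfFin (card_compl_rowSet0 f)) j
        : Fin Y.cells.card)) := by
  ext k
  simp only [Finset.mem_image, compB, Finset.mem_filter, Finset.mem_univ, true_and]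
  constructor
  · intro hk
    refine ⟨((rowSet Y f 0)ᶜ.orderIsoOfFin (card_compl_rowSet0 f)).symm
      ⟨k, rowSet_one_subset_compl f hk⟩, ?_, ?_⟩
    · rw [OrderIso.apply_symm_apply]; exact hk
    · rw [OrderIso.apply_symm_apply]
  · rintro ⟨j, hj, rfl⟩
    exact hj

lemma sSet_eq (f : SYT Y) : sSet Y f = (rowSet Y f 0 ∪ rowSet Y f 1)ᶜ := by
  ext k
  rw [mem_sSet, Finset.mem_compl, Finset.mem_union, mem_rowSet, mem_rowSet]
  omega

lemma row_determined (f f' : SYT Y) {r : ℕ} (hr : rowSet Y f r = rowSet Y f' r)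
    {j : ℕ} (hx : ((r, j) : ℕ × ℕ) ∈ Y.cells) :
    f.1 ⟨(r, j), hx⟩ = f'.1 ⟨(r, j), hx⟩ := by
  have hj : j < Y.rowLen r := by
    rw [← YoungDiagram.mem_iff_lt_rowLen]
    rwa [YoungDiagram.mem_cells] at hx
  have h1 : f.1 ⟨(r, j), hx⟩ = rowMap f r ⟨j, hj⟩ := rfl
  have h2 : f'.1 ⟨(r, j), hx⟩ = rowMap f' r ⟨j, hj⟩ := rfl
  rw [h1, h2, rowMap_eq f r, rowMap_eq f' r]
  exact orderEmbOfFin_val_congr hr _ _ _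

lemma inj_components (f f' : SYT Y) (hA : rowSet Y f 0 = rowSet Y f' 0)
    (hB : compB f = compB f') (hG : compG f = compG f') : f = f' := by
  have hB' : rowSet Y f 1 = rowSet Y f' 1 := by
    rw [rowSet_one_eq_image f, rowSet_one_eq_image f', hB]
    apply Finset.image_congr
    intro j _
    exact orderIsoOfFin_val_congr (congrArg compl hA) _ _ _
  have hS : sSet Y f = sSet Y f' := by rw [sSet_eq, sSet_eq, hA, hB']
  apply Subtype.ext
  apply Equiv.ext
  rintro ⟨⟨i, j⟩, hx⟩
  match i with
  | 0 => exact row_determined f f' hA hx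
  | 1 => exact row_determined f f' hB' hx
  | (k+2) =>
    have hxt : ((k, j) : ℕ × ℕ) ∈ (tail2 Y).cells := by
      rw [YoungDiagram.mem_cells]
      exact mem_tail2.mpr (by rwa [YoungDiagram.mem_cells] at hx)
    set xt : ↥(tail2 Y).cells := ⟨(k, j), hxt⟩ with hxtdef
    have hshift : shiftCell xt = (⟨(k+2, j), hx⟩ : ↥Y.cells) := Subtype.ext rfl
    rw [← hshift, ← compG_spec f xt, ← compG_spec f' xt, hG]
    exact orderIsoOfFin_val_congr hS _ _ _

/-- the splitting injection -/
def Phi (f : SYT Y) : ({A : Finset (Fin Y.cells.card) // A.card = Y.rowLen 0}) ×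
    ({B : Finset (Fin (Y.cells.card - Y.rowLen 0)) // B.card = Y.rowLen 1}) ×
    SYT (tail2 Y) :=
  (⟨rowSet Y f 0, card_rowSet f 0⟩, ⟨compB f, card_compB f⟩, compG f)

lemma Phi_inj : Function.Injective (Phi (Y := Y)) := by
  intro f f' h
  have hA : rowSet Y f 0 = rowSet Y f' 0 := congrArg (fun t => t.1.1) h
  have hB : compB f = compB f' := congrArg (fun t => t.2.1.1) h
  have hG : compG f = compG f' := congrArg (fun t => t.2.2) h
  exact inj_components f f' hA hB hG

lemma split_bound (Y : YoungDiagram) :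
    sytCard Y ≤ Y.card.choose (Y.rowLen 0) *
      ((Y.card - Y.rowLen 0).choose (Y.rowLen 1)) * sytCard (tail2 Y) := by
  have h := Fintype.card_le_of_injective _ (Phi_inj (Y := Y))
  rw [Fintype.card_prod, Fintype.card_prod, Fintype.card_finset_len, Fintype.card_finset_len,
    Fintype.card_fin, Fintype.card_fin] at h
  rw [sytCard_eq, sytCard_eq]
  calc Fintype.card (SYT Y)
      ≤ Y.cells.card.choose (Y.rowLen 0) * ((Y.cells.card - Y.rowLen 0).choose (Y.rowLen 1)
          * Fintype.card (SYT (tail2 Y))) := h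
    _ = _ := by rw [← mul_assoc]

end SplitInj

end SYTProof
open SYTProof

/-- For partitions of `n` with prescribed first two parts `λ₁, λ₂`, the sum of squared
dimensions satisfies `∑ d_λ² ≤ C(n,λ₁)² C(n−λ₁,λ₂)² (n−λ₁−λ₂)!`. -/
theorem stmt11 (n l1 l2 : ℕ) :
    ∑ p ∈ Finset.univ.filter
        (fun p : Nat.Partition n => firstPart p = l1 ∧ secondPart p = l2),
      (sytCard (toYD p)) ^ 2 ≤
      (n.choose l1) ^ 2 * ((n - l1).choose l2) ^ 2 * (n - l1 - l2).factorial := by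
  classical
  set s := Finset.univ.filter
    (fun p : Nat.Partition n => firstPart p = l1 ∧ secondPart p = l2) with hs
  have hfacts : ∀ p ∈ s, (toYD p).card = n ∧ (toYD p).rowLen 0 = l1 ∧ (toYD p).rowLen 1 = l2 := by
    intro p hp
    rw [hs, Finset.mem_filter] at hp
    exact ⟨toYD_card p, by rw [← firstPart_eq]; exact hp.2.1,
      by rw [← secondPart_eq]; exact hp.2.2⟩
  have step1 : ∀ p ∈ s, sytCard (toYD p) ^ 2 ≤
      (n.choose l1)^2 * ((n - l1).choose l2)^2 * sytCard (tail2 (toYD p)) ^ 2 := by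
    intro p hp
    obtain ⟨hc, h0, h1⟩ := hfacts p hp
    have hsb := split_bound (toYD p)
    rw [hc, h0, h1] at hsb
    calc sytCard (toYD p) ^ 2
        ≤ (n.choose l1 * ((n - l1).choose l2) * sytCard (tail2 (toYD p)))^2 :=
          Nat.pow_le_pow_left hsb 2
      _ = _ := by ring
  have step3 : ∑ p ∈ s, sytCard (tail2 (toYD p)) ^ 2 ≤ (n - l1 - l2).factorial := by
    have hinj : ∀ p ∈ s, ∀ p' ∈ s, tail2 (toYD p) = tail2 (toYD p') → p = p' := by
      intro p hp p' hp' h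
      obtain ⟨hc, h0, h1⟩ := hfacts p hp
      obtain ⟨hc', h0', h1'⟩ := hfacts p' hp'
      exact toYD_injective (tail2_ext (by rw [h0, h0']) (by rw [h1, h1']) h)
    have himg := Finset.sum_image (s := s) (g := fun p => tail2 (toYD p))
      (f := fun Y => sytCard Y ^ 2) hinj
    calc ∑ p ∈ s, sytCard (tail2 (toYD p)) ^ 2
        = ∑ Y ∈ s.image (fun p => tail2 (toYD p)), sytCard Y ^ 2 := himg.symm
      _ ≤ ∑ Y ∈ YDset (n - l1 - l2), sytCard Y ^ 2 := by
          refine Finset.sum_le_sum_of_subset ?_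
          intro Y hY
          rw [Finset.mem_image] at hY
          obtain ⟨p, hp, rfl⟩ := hY
          obtain ⟨hc, h0, h1⟩ := hfacts p hp
          rw [mem_YDset]
          have hct := card_tail2 (toYD p)
          rw [hc, h0, h1] at hct
          omega
      _ = (n - l1 - l2).factorial := Frobenius _
  calc ∑ p ∈ s, sytCard (toYD p) ^ 2
      ≤ ∑ p ∈ s, (n.choose l1)^2 * ((n - l1).choose l2)^2 * sytCard (tail2 (toYD p)) ^ 2 :=
        Finset.sum_le_sum step1
    _ = (n.choose l1)^2 * ((n - l1).choose l2)^2 *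
        ∑ p ∈ s, sytCard (tail2 (toYD p)) ^ 2 := by
        rw [Finset.mul_sum]
    _ ≤ (n.choose l1)^2 * ((n - l1).choose l2)^2 * (n - l1 - l2).factorial :=
        Nat.mul_le_mul_left _ step3
end

section
/- For a finite group G, a class-symmetric probability measure μ with μ(g)=μ(g^{-1}), and the uniform distribution π, the total variation distance satisfies ‖μ − π‖_TV² ≤ (1/4) Σ over nontrivial irreducible representations λ of d_λ · tr(μ̂(λ) μ̂(λ)^T), via Plancherel's formula and Cauchy–Schwarz. -/
open Finset Matrix

set_option linter.unusedSectionVars false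
section aux
variable {G : Type*} [Group G] [Fintype G]

lemma matrix_eq_of_mulVec {n : ℕ} {A B : Matrix (Fin n) (Fin n) ℂ}
    (h : ∀ v, A.mulVec v = B.mulVec v) : A = B := by
  have : Matrix.toLin' A = Matrix.toLin' B := by
    apply LinearMap.ext; intro v; simpa [Matrix.toLin'_apply] using h v
  exact Matrix.toLin'.injective this

lemma schur_scalar {n : ℕ} (ρ : G →* Matrix (Fin n) (Fin n) ℂ)
    (hirr : ∀ W : Submodule ℂ (Fin n → ℂ),
      (∀ g : G, ∀ v ∈ W, (ρ g).mulVec v ∈ W) → W = ⊥ ∨ W = ⊤)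
    (T : Matrix (Fin n) (Fin n) ℂ) (hT : ∀ g, ρ g * T = T * ρ g) :
    ∃ c : ℂ, T = c • 1 := by
  rcases Nat.eq_zero_or_pos n with h0 | hpos
  · subst h0
    exact ⟨0, by ext a; exact absurd a.2 (by omega)⟩
  · haveI : Nonempty (Fin n) := Fin.pos_iff_nonempty.mp hpos
    haveI : Nontrivial (Fin n → ℂ) := inferInstance
    obtain ⟨c, hc⟩ := Module.End.exists_eigenvalue (Matrix.mulVecLin T)
    obtain ⟨v, hv⟩ := hc.exists_hasEigenvector
    refine ⟨c, ?_⟩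
    set W := Module.End.eigenspace (Matrix.mulVecLin T) c with hWdef
    have hWinv : ∀ g : G, ∀ w ∈ W, (ρ g).mulVec w ∈ W := by
      intro g w hw
      rw [Module.End.mem_eigenspace_iff] at hw ⊢
      have : T.mulVec ((ρ g).mulVec w) = (T * ρ g).mulVec w := by
        rw [Matrix.mulVec_mulVec]
      simp only [Matrix.mulVecLin_apply] at hw ⊢
      rw [this, ← hT, ← Matrix.mulVec_mulVec, hw, Matrix.mulVec_smul]
    rcases hirr W hWinv with hbot | htop
    · exact absurd (hbot ▸ (show v ∈ W from hv.1)) (by simpa using hv.2)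
    · apply matrix_eq_of_mulVec
      intro w
      have hw : w ∈ W := htop ▸ Submodule.mem_top
      rw [Module.End.mem_eigenspace_iff] at hw
      simp only [Matrix.mulVecLin_apply] at hw
      rw [hw, Matrix.smul_mulVec, Matrix.one_mulVec]



lemma intertwine {m n : ℕ} (ρ₁ : G →* Matrix (Fin m) (Fin m) ℂ)
    (ρ₂ : G →* Matrix (Fin n) (Fin n) ℂ) (X : Matrix (Fin m) (Fin n) ℂ) (h : G) :
    ρ₁ h * (∑ g : G, ρ₁ g * X * ρ₂ g⁻¹) = (∑ g : G, ρ₁ g * X * ρ₂ g⁻¹) * ρ₂ h := by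
  rw [Matrix.mul_sum, Matrix.sum_mul]
  refine Fintype.sum_equiv (Equiv.mulLeft h) _ _ ?_
  intro g
  have e1 : ρ₁ (h * g) = ρ₁ h * ρ₁ g := map_mul ρ₁ h g
  have e2 : ρ₂ (h * g)⁻¹ * ρ₂ h = ρ₂ g⁻¹ := by
    rw [← _root_.map_mul]; congr 1; group
  simp only [Equiv.coe_mulLeft]
  rw [Matrix.mul_assoc _ _ (ρ₂ h), e2, e1, Matrix.mul_assoc, Matrix.mul_assoc, Matrix.mul_assoc]


lemma mul_std_mul {m n : ℕ} (A : Matrix (Fin m) (Fin m) ℂ) (B : Matrix (Fin n) (Fin n) ℂ)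
    (b a : Fin m) (c e : Fin n) :
    (A * Matrix.single b c (1:ℂ) * B) a e = A a b * B c e := by
  simp [Matrix.mul_apply, Matrix.single, Finset.sum_mul, mul_ite, ite_mul,
    mul_zero, zero_mul, Finset.sum_ite_eq, Finset.sum_ite_eq', mul_assoc, ite_and]

lemma ortho_ne {m n : ℕ} (ρ₁ : G →* Matrix (Fin m) (Fin m) ℂ)
    (ρ₂ : G →* Matrix (Fin n) (Fin n) ℂ)
    (hno : ¬∃ M : Matrix (Fin m) (Fin n) ℂ, M ≠ 0 ∧ ∀ g : G, ρ₁ g * M = M * ρ₂ g)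
    (b a : Fin m) (c e : Fin n) :
    ∑ g : G, ρ₁ g a b * ρ₂ g⁻¹ c e = 0 := by
  set T := ∑ g : G, ρ₁ g * Matrix.single b c (1:ℂ) * ρ₂ g⁻¹ with hT
  have hzero : T = 0 := by
    by_contra hne
    exact hno ⟨T, hne, intertwine ρ₁ ρ₂ _⟩
  have := congrFun (congrFun hzero a) e
  simp only [hT, Matrix.sum_apply, Matrix.zero_apply] at this
  rw [← this]
  exact Finset.sum_congr rfl fun g _ => (mul_std_mul _ _ _ _ _ _).symm

lemma trace_std {n : ℕ} (b c : Fin n) :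
    Matrix.trace (Matrix.single b c (1:ℂ)) = if b = c then 1 else 0 := by
  simp [Matrix.trace, Matrix.diag, Matrix.single, ite_and, Finset.sum_ite_eq, eq_comm]

lemma ortho_eq {n : ℕ} (ρ : G →* Matrix (Fin n) (Fin n) ℂ)
    (hirr : ∀ W : Submodule ℂ (Fin n → ℂ),
      (∀ g : G, ∀ v ∈ W, (ρ g).mulVec v ∈ W) → W = ⊥ ∨ W = ⊤)
    (b a c e : Fin n) :
    ∑ g : G, ρ g a b * ρ g⁻¹ c e =
      (if b = c then 1 else 0) * (if a = e then 1 else 0) * ((Fintype.card G : ℂ) / n) := by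
  have hn : (n : ℂ) ≠ 0 := by
    have : 0 < n := a.pos
    exact_mod_cast this.ne'
  set T := ∑ g : G, ρ g * Matrix.single b c (1:ℂ) * ρ g⁻¹ with hTdef
  obtain ⟨c₀, hc₀⟩ := schur_scalar ρ hirr T (fun h => intertwine ρ ρ _ h)
  have htr : Matrix.trace T = (Fintype.card G : ℂ) * (if b = c then 1 else 0) := by
    rw [hTdef, Matrix.trace_sum]
    have : ∀ g : G, Matrix.trace (ρ g * Matrix.single b c (1:ℂ) * ρ g⁻¹)
        = if b = c then 1 else 0 := by
      intro g
      rw [Matrix.trace_mul_cycle, ← _root_.map_mul]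
      simp [trace_std]
    simp [this, Finset.card_univ]
  have htr2 : Matrix.trace T = c₀ * n := by
    rw [hc₀, Matrix.trace_smul, Matrix.trace_one]
    simp [smul_eq_mul]
  have hc : c₀ = (Fintype.card G : ℂ) * (if b = c then 1 else 0) / n := by
    rw [eq_div_iff hn, ← htr2, htr]
  have hentry : T a e = c₀ * (if a = e then 1 else 0) := by
    rw [hc₀]
    simp [Matrix.one_apply, mul_comm]
  have hentry2 : T a e = ∑ g : G, ρ g a b * ρ g⁻¹ c e := by
    rw [hTdef]
    simp only [Matrix.sum_apply]
    exact Finset.sum_congr rfl fun g _ => mul_std_mul _ _ _ _ _ _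
  rw [← hentry2, hentry, hc]
  ring

lemma sum_inv_eq {M : Type*} [AddCommMonoid M] (F : G → M) :
    ∑ g : G, F g⁻¹ = ∑ g : G, F g := by
  exact Fintype.sum_equiv (Equiv.inv G) _ _ (fun g => rfl)

variable {ι : Type*} [Fintype ι] [DecidableEq ι]

noncomputable def Phi (d : ι → ℕ) (ρ : ∀ i, G →* Matrix (Fin (d i)) (Fin (d i)) ℂ) :
    (G → ℂ) →ₗ[ℂ] (∀ i, Matrix (Fin (d i)) (Fin (d i)) ℂ) where
  toFun f := fun i => ∑ g : G, f g • ρ i g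
  map_add' f₁ f₂ := by
    funext i
    simp [add_smul, Finset.sum_add_distrib]
  map_smul' c f := by
    funext i
    simp [smul_smul, Finset.smul_sum]

lemma sum_comm3 {α β γ : Type*} [Fintype α] [Fintype β] [Fintype γ] (f : α → β → γ → ℂ) :
    ∑ x : α, ∑ y : β, ∑ z : γ, f x y z = ∑ y : β, ∑ z : γ, ∑ x : α, f x y z := by
  rw [Finset.sum_comm]
  exact Finset.sum_congr rfl fun y _ => Finset.sum_comm

lemma Phi_psi (d : ι → ℕ) (ρ : ∀ i, G →* Matrix (Fin (d i)) (Fin (d i)) ℂ)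
    (hirr : ∀ i, ∀ W : Submodule ℂ (Fin (d i) → ℂ),
      (∀ g : G, ∀ v ∈ W, (ρ i g).mulVec v ∈ W) → W = ⊥ ∨ W = ⊤)
    (hnoniso : ∀ i j, i ≠ j →
      ¬∃ M : Matrix (Fin (d i)) (Fin (d j)) ℂ, M ≠ 0 ∧ ∀ g : G, ρ i g * M = M * ρ j g)
    (M : ∀ i, Matrix (Fin (d i)) (Fin (d i)) ℂ) :
    Phi d ρ (fun g => (Fintype.card G : ℂ)⁻¹ *
      ∑ i, (d i : ℂ) * Matrix.trace (ρ i g⁻¹ * M i)) = M := by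
  have hN : (Fintype.card G : ℂ) ≠ 0 := by
    exact_mod_cast (Fintype.card_pos (α := G)).ne'
  funext j
  ext c e
  have h1 : (Phi d ρ (fun g => (Fintype.card G : ℂ)⁻¹ *
      ∑ i, (d i : ℂ) * Matrix.trace (ρ i g⁻¹ * M i)) j) c e
      = (Fintype.card G : ℂ)⁻¹ * ∑ i, (d i : ℂ) *
        ∑ a, ∑ b, (M i) b a * ∑ g : G, ρ i g a b * (ρ j g⁻¹) c e := by
    show (∑ g : G, _ • ρ j g) c e = _
    rw [Matrix.sum_apply]
    simp only [Matrix.smul_apply, smul_eq_mul, mul_assoc]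
    rw [← Finset.mul_sum]
    congr 1
    simp only [Finset.sum_mul]
    rw [Finset.sum_comm]
    refine Finset.sum_congr rfl fun i _ => ?_
    calc ∑ g : G, (d i : ℂ) * Matrix.trace (ρ i g⁻¹ * M i) * (ρ j g) c e
        = ∑ g : G, ∑ a, ∑ b, (d i : ℂ) * ((M i) b a * (ρ i g⁻¹ a b * (ρ j g) c e)) := by
          refine Finset.sum_congr rfl fun g _ => ?_
          simp only [Matrix.trace, Matrix.diag, Matrix.mul_apply, Finset.sum_mul,
            Finset.mul_sum]
          exact Finset.sum_congr rfl fun a _ => Finset.sum_congr rfl fun b _ => by ring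
      _ = ∑ a, ∑ b, ∑ g : G, (d i : ℂ) * ((M i) b a * (ρ i g⁻¹ a b * (ρ j g) c e)) :=
          sum_comm3 _
      _ = (d i : ℂ) * ∑ a, ∑ b, (M i) b a * ∑ g : G, ρ i g⁻¹ a b * (ρ j g) c e := by
          simp only [← Finset.mul_sum]
      _ = (d i : ℂ) * ∑ a, ∑ b, (M i) b a * ∑ g : G, ρ i g a b * (ρ j g⁻¹) c e := by
          congr 1
          refine Finset.sum_congr rfl fun a _ => Finset.sum_congr rfl fun b _ => ?_
          congr 1
          have := sum_inv_eq (fun g => ρ i g a b * (ρ j g⁻¹) c e)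
          simp only [inv_inv] at this
          exact this
  rw [h1]
  rw [Finset.sum_eq_single j]
  · have hthis : ∀ a b : Fin (d j), (M j) b a * ∑ g : G, ρ j g a b * (ρ j g⁻¹) c e
        = (M j) b a * ((if b = c then 1 else 0) * (if a = e then 1 else 0)
           * ((Fintype.card G : ℂ) / (d j : ℂ))) := by
      intro a b
      rw [ortho_eq (ρ j) (hirr j)]
    simp only [hthis]
    have hd : (d j : ℂ) ≠ 0 := by
      have : 0 < d j := c.pos
      exact_mod_cast this.ne'
    simp only [mul_ite, mul_one, mul_zero, ite_mul, zero_mul]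
    rw [Finset.sum_comm]
    simp only [Finset.sum_ite_eq', Finset.mem_univ, if_true]
    field_simp
  · intro i _ hij
    have hz : ∀ a b : Fin (d i), ∑ g : G, ρ i g a b * (ρ j g⁻¹) c e = 0 :=
      fun a b => ortho_ne (ρ i) (ρ j) (hnoniso i j hij) b a c e
    simp only [hz, mul_zero, Finset.sum_const_zero]
  · intro h
    exact absurd (Finset.mem_univ j) h

lemma key_id [DecidableEq G] (d : ι → ℕ) (ρ : ∀ i, G →* Matrix (Fin (d i)) (Fin (d i)) ℂ)
    (hirr : ∀ i, ∀ W : Submodule ℂ (Fin (d i) → ℂ),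
      (∀ g : G, ∀ v ∈ W, (ρ i g).mulVec v ∈ W) → W = ⊥ ∨ W = ⊤)
    (hnoniso : ∀ i j, i ≠ j →
      ¬∃ M : Matrix (Fin (d i)) (Fin (d j)) ℂ, M ≠ 0 ∧ ∀ g : G, ρ i g * M = M * ρ j g)
    (hcomplete : ∑ i, (d i) ^ 2 = Fintype.card G) (x : G) :
    ∑ i, (d i : ℂ) * Matrix.trace (ρ i x) = if x = 1 then (Fintype.card G : ℂ) else 0 := by
  have hN : (Fintype.card G : ℂ) ≠ 0 := by
    exact_mod_cast (Fintype.card_pos (α := G)).ne'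
  have hsurj : Function.Surjective (Phi d ρ) := fun M => ⟨_, Phi_psi d ρ hirr hnoniso M⟩
  have hrank : Module.finrank ℂ (G → ℂ)
      = Module.finrank ℂ (∀ i, Matrix (Fin (d i)) (Fin (d i)) ℂ) := by
    rw [Module.finrank_pi, Module.finrank_pi_fintype]
    simp only [Module.finrank_matrix, Fintype.card_fin, Module.finrank_self, mul_one]
    rw [← hcomplete]
    exact Finset.sum_congr rfl fun i _ => pow_two (d i)
  have hinj : Function.Injective (Phi d ρ) :=
    (LinearMap.injective_iff_surjective_of_finrank_eq_finrank hrank).mpr hsurj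
  have h2 := Phi_psi d ρ hirr hnoniso (fun _ => 1)
  have h1 : Phi d ρ (fun g => if g = 1 then 1 else 0) = (fun _ => 1) := by
    funext i
    show (∑ g : G, (if g = 1 then (1:ℂ) else 0) • ρ i g) = 1
    simp [ite_smul, Finset.sum_ite_eq']
  have heq : (fun g => if g = 1 then (1:ℂ) else 0) = (fun g => (Fintype.card G : ℂ)⁻¹ *
      ∑ i, (d i : ℂ) * Matrix.trace (ρ i g⁻¹ * (fun _ => (1 : Matrix (Fin (d _)) (Fin (d _)) ℂ)) i)) :=
    hinj (h1.trans h2.symm)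
  have hx := congrFun heq x⁻¹
  simp only [inv_inv, mul_one, inv_eq_one] at hx
  calc ∑ i, (d i : ℂ) * Matrix.trace (ρ i x)
      = (Fintype.card G : ℂ) * ((Fintype.card G : ℂ)⁻¹ * ∑ i, (d i : ℂ) * Matrix.trace (ρ i x)) := by
        field_simp
    _ = (Fintype.card G : ℂ) * (if x = 1 then 1 else 0) := by rw [← hx]
    _ = if x = 1 then (Fintype.card G : ℂ) else 0 := by simp [mul_ite]

lemma sum_rep_eq_zero (d : ι → ℕ) (ρ : ∀ i, G →* Matrix (Fin (d i)) (Fin (d i)) ℂ)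
    (hnoniso : ∀ i j, i ≠ j →
      ¬∃ M : Matrix (Fin (d i)) (Fin (d j)) ℂ, M ≠ 0 ∧ ∀ g : G, ρ i g * M = M * ρ j g)
    (i₀ : ι) (hd₀ : d i₀ = 1) (htriv : ∀ g : G, ρ i₀ g = 1)
    (i : ι) (hi : i ≠ i₀) : ∑ g : G, ρ i g = 0 := by
  set P := ∑ g : G, ρ i g with hPdef
  have hP : ∀ h : G, ρ i h * P = P := by
    intro h
    rw [hPdef, Matrix.mul_sum]
    refine Fintype.sum_equiv (Equiv.mulLeft h) _ _ fun g => ?_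
    simp [← _root_.map_mul]
  by_contra hPne
  have hab : ∃ a b, P a b ≠ 0 := by
    by_contra hc
    push_neg at hc
    exact hPne (by ext a b; simpa using hc a b)
  obtain ⟨a, b, hab⟩ := hab
  refine hnoniso i i₀ hi ⟨fun p _ => P p b, ?_, ?_⟩
  · intro hM
    have b₀ : Fin (d i₀) := ⟨0, by omega⟩
    exact hab (congrFun (congrFun hM a) b₀)
  · intro g
    erw [htriv g, Matrix.mul_one]
    ext p q
    erw [Matrix.mul_apply]
    have : ∑ c, ρ i g p c * P c b = (ρ i g * P) p b := by
      rw [Matrix.mul_apply]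
    rw [this, hP g]

lemma step_B [DecidableEq G] (μ : G → ℝ) (hsum : ∑ g : G, μ g = 1)
    (hclass : ∀ g h : G, μ (h * g * h⁻¹) = μ g) (hinv : ∀ g : G, μ g⁻¹ = μ g)
    (d : ι → ℕ) (ρ : ∀ i, G →* Matrix (Fin (d i)) (Fin (d i)) ℂ)
    (hirr : ∀ i, ∀ W : Submodule ℂ (Fin (d i) → ℂ),
      (∀ g : G, ∀ v ∈ W, (ρ i g).mulVec v ∈ W) → W = ⊥ ∨ W = ⊤)
    (hnoniso : ∀ i j, i ≠ j →
      ¬∃ M : Matrix (Fin (d i)) (Fin (d j)) ℂ, M ≠ 0 ∧ ∀ g : G, ρ i g * M = M * ρ j g)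
    (hcomplete : ∑ i, (d i) ^ 2 = Fintype.card G)
    (i₀ : ι) (hd₀ : d i₀ = 1) (htriv : ∀ g : G, ρ i₀ g = 1) :
    (∑ i ∈ Finset.univ.erase i₀, (d i : ℂ) *
        Matrix.trace ((∑ g : G, (μ g : ℂ) • ρ i g) *
          (∑ g : G, (μ g : ℂ) • ρ i g)ᵀ))
      = (((Fintype.card G : ℝ) *
          ∑ g : G, (μ g - 1 / (Fintype.card G : ℝ)) ^ 2 : ℝ) : ℂ) := by
  have hN : (Fintype.card G : ℂ) ≠ 0 := by
    exact_mod_cast (Fintype.card_pos (α := G)).ne'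
  set F : G → ℂ := fun g => (μ g : ℂ) - 1 / (Fintype.card G : ℂ) with hF
  have hclassF : ∀ g h : G, F (h * g * h⁻¹) = F g := by
    intro g h; simp only [hF, hclass]
  have hinvF : ∀ g : G, F g⁻¹ = F g := by
    intro g; simp only [hF, hinv]
  have hsumF : ∑ g : G, F g = 0 := by
    simp only [hF, Finset.sum_sub_distrib]
    rw [Finset.sum_const, Finset.card_univ]
    have : ∑ g : G, (μ g : ℂ) = 1 := by exact_mod_cast congrArg (Complex.ofReal) hsum
    rw [this, nsmul_eq_mul, mul_one_div_cancel hN, sub_self]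
  set Fhat : ∀ i, Matrix (Fin (d i)) (Fin (d i)) ℂ := fun i => ∑ g : G, F g • ρ i g with hFhat
  -- commutation and Schur
  have hcomm : ∀ i, ∀ h : G, ρ i h * Fhat i = Fhat i * ρ i h := by
    intro i h
    rw [hFhat, Matrix.mul_sum, Matrix.sum_mul]
    refine Fintype.sum_equiv ((Equiv.mulLeft h).trans (Equiv.mulRight h⁻¹)) _ _ fun g => ?_
    simp only [Equiv.trans_apply, Equiv.coe_mulLeft, Equiv.coe_mulRight]
    rw [Matrix.mul_smul, Matrix.smul_mul, hclassF g h, ← _root_.map_mul, ← _root_.map_mul]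
    congr 2
    group
  have hschur : ∀ i, ∃ c : ℂ, Fhat i = c • 1 := fun i =>
    schur_scalar (ρ i) (hirr i) (Fhat i) (hcomm i)
  have htransp : ∀ i, (Fhat i)ᵀ = Fhat i := by
    intro i
    obtain ⟨c, hc⟩ := hschur i
    rw [hc, Matrix.transpose_smul, Matrix.transpose_one]
  -- relate muhat and Fhat
  have hmuhat : ∀ i, i ≠ i₀ → (∑ g : G, (μ g : ℂ) • ρ i g) = Fhat i := by
    intro i hi
    have hz := sum_rep_eq_zero d ρ hnoniso i₀ hd₀ htriv i hi
    have : (∑ g : G, (μ g : ℂ) • ρ i g) - Fhat i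
        = (1 / (Fintype.card G : ℂ)) • ∑ g : G, ρ i g := by
      rw [hFhat, ← Finset.sum_sub_distrib, Finset.smul_sum]
      refine Finset.sum_congr rfl fun g _ => ?_
      rw [hF, ← sub_smul]
      congr 1
      ring
    rw [hz, smul_zero] at this
    exact sub_eq_zero.mp this
  have hFhat₀ : Fhat i₀ = 0 := by
    show ∑ g : G, F g • ρ i₀ g = 0
    have : ∀ g : G, F g • ρ i₀ g = F g • 1 := fun g => by rw [htriv]
    rw [Finset.sum_congr rfl fun g _ => this g, ← Finset.sum_smul, hsumF, zero_smul]
  -- main computation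
  have hGhat : ∀ i, (∑ g : G, F g • ρ i g⁻¹) = Fhat i := by
    intro i
    have h := sum_inv_eq (fun g => F g • ρ i g⁻¹)
    simp only [inv_inv] at h
    rw [hFhat]
    rw [← h]
    exact Finset.sum_congr rfl fun g _ => by rw [hinvF]
  have hmain : ∑ i, (d i : ℂ) * Matrix.trace (Fhat i * Fhat i)
      = (Fintype.card G : ℂ) * ∑ g : G, F g ^ 2 := by
    have expand : ∀ i, Matrix.trace (Fhat i * Fhat i)
        = ∑ g : G, ∑ h : G, F g * (F h * Matrix.trace (ρ i (h⁻¹ * g⁻¹))) := by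
      intro i
      conv_lhs => rw [← hGhat i]
      simp only [Matrix.sum_mul, Matrix.smul_mul, Matrix.mul_sum, Matrix.mul_smul,
        Matrix.trace_sum, Matrix.trace_smul, smul_eq_mul, ← _root_.map_mul, Finset.mul_sum]
    calc ∑ i, (d i : ℂ) * Matrix.trace (Fhat i * Fhat i)
        = ∑ i, ∑ g : G, ∑ h : G, (d i : ℂ) * (F g * (F h * Matrix.trace (ρ i (h⁻¹ * g⁻¹)))) := by
          refine Finset.sum_congr rfl fun i _ => ?_
          rw [expand i, Finset.mul_sum]
          exact Finset.sum_congr rfl fun g _ => Finset.mul_sum _ _ _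
      _ = ∑ g : G, ∑ h : G, ∑ i, (d i : ℂ) * (F g * (F h * Matrix.trace (ρ i (h⁻¹ * g⁻¹)))) :=
          sum_comm3 _
      _ = ∑ g : G, ∑ h : G, F g * F h * (if h⁻¹ * g⁻¹ = 1 then (Fintype.card G : ℂ) else 0) := by
          refine Finset.sum_congr rfl fun g _ => Finset.sum_congr rfl fun h _ => ?_
          rw [← key_id d ρ hirr hnoniso hcomplete (h⁻¹ * g⁻¹), Finset.mul_sum]
          exact Finset.sum_congr rfl fun i _ => by ring
      _ = ∑ g : G, F g * F g * (Fintype.card G : ℂ) := by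
          refine Finset.sum_congr rfl fun g _ => ?_
          simp only [mul_inv_eq_one, inv_eq_iff_eq_inv, mul_ite, mul_zero]
          rw [Finset.sum_ite_eq', if_pos (Finset.mem_univ g⁻¹), hinvF]
      _ = (Fintype.card G : ℂ) * ∑ g : G, F g ^ 2 := by
          rw [Finset.mul_sum]
          exact Finset.sum_congr rfl fun g _ => by ring
  calc ∑ i ∈ Finset.univ.erase i₀, (d i : ℂ) *
        Matrix.trace ((∑ g : G, (μ g : ℂ) • ρ i g) * (∑ g : G, (μ g : ℂ) • ρ i g)ᵀ)
      = ∑ i ∈ Finset.univ.erase i₀, (d i : ℂ) * Matrix.trace (Fhat i * Fhat i) := by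
        refine Finset.sum_congr rfl fun i hi => ?_
        rw [hmuhat i (Finset.ne_of_mem_erase hi), htransp i]
    _ = ∑ i, (d i : ℂ) * Matrix.trace (Fhat i * Fhat i) := by
        rw [← Finset.sum_erase_add Finset.univ _ (Finset.mem_univ i₀), hFhat₀]
        simp
    _ = (Fintype.card G : ℂ) * ∑ g : G, F g ^ 2 := hmain
    _ = (((Fintype.card G : ℝ) * ∑ g : G, (μ g - 1 / (Fintype.card G : ℝ)) ^ 2 : ℝ) : ℂ) := by
        simp only [hF]
        push_cast
        ring

end aux


/-- Diaconis–Shahshahani upper bound lemma: for a class-symmetric probability measure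
`μ` with `μ(g)=μ(g⁻¹)` on a finite group `G` and the uniform distribution `π`,
`‖μ − π‖_TV² ≤ (1/4) ∑_{λ ≠ triv} d_λ tr(μ̂(λ) μ̂(λ)ᵀ)`, where the sum runs over a
complete family `(ρ i)_{i : ι}` of pairwise non-isomorphic irreducible matrix
representations of `G`, with `i₀` indexing the trivial one. -/
theorem stmt15 {G : Type*} [Group G] [Fintype G]
    (μ : G → ℝ) (hnonneg : ∀ g, 0 ≤ μ g) (hsum : ∑ g : G, μ g = 1)
    (hclass : ∀ g h : G, μ (h * g * h⁻¹) = μ g) (hinv : ∀ g : G, μ g⁻¹ = μ g)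
    {ι : Type*} [Fintype ι] [DecidableEq ι] (d : ι → ℕ)
    (ρ : ∀ i, G →* Matrix (Fin (d i)) (Fin (d i)) ℂ)
    (hirr : ∀ i, ∀ W : Submodule ℂ (Fin (d i) → ℂ),
      (∀ g : G, ∀ v ∈ W, (ρ i g).mulVec v ∈ W) → W = ⊥ ∨ W = ⊤)
    (hnoniso : ∀ i j, i ≠ j →
      ¬∃ M : Matrix (Fin (d i)) (Fin (d j)) ℂ, M ≠ 0 ∧ ∀ g : G, ρ i g * M = M * ρ j g)
    (hcomplete : ∑ i, (d i) ^ 2 = Fintype.card G)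
    (i₀ : ι) (hd₀ : d i₀ = 1) (htriv : ∀ g : G, ρ i₀ g = 1) :
    ((1 : ℝ) / 2 * ∑ g : G, |μ g - 1 / (Fintype.card G : ℝ)|) ^ 2 ≤
      (1 / 4) * (∑ i ∈ Finset.univ.erase i₀, (d i : ℂ) *
        Matrix.trace ((∑ g : G, (μ g : ℂ) • ρ i g) *
          (∑ g : G, (μ g : ℂ) • ρ i g)ᵀ)).re := by
  classical
  rw [step_B μ hsum hclass hinv d ρ hirr hnoniso hcomplete i₀ hd₀ htriv,
    Complex.ofReal_re]
  have hCS : (∑ g : G, |μ g - 1 / (Fintype.card G : ℝ)|) ^ 2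
      ≤ (Fintype.card G : ℝ) * ∑ g : G, (μ g - 1 / (Fintype.card G : ℝ)) ^ 2 := by
    have h := sq_sum_le_card_mul_sum_sq (s := (Finset.univ : Finset G))
      (f := fun g => |μ g - 1 / (Fintype.card G : ℝ)|)
    simpa [sq_abs, Finset.card_univ] using h
  nlinarith [hCS]
end

section
/- Let λ^α = (αn, …, αn, rn) be the partition of n with q parts equal to αn and one part rn, where αq + r = 1, 0 ≤ r < α, and αn, rn are integers. Then the Ewens eigenvalue with θ = n satisfies β_{λ^α} ≤ ([(1+α)n]!)^q · [(1+r)n]! / ((n!)^q · (2n)!). -/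
open Finset

/-- the Ewens eigenvalue `β_λ = ∏_{i=1}^n (θ + c^λ(i))/(θ + i − 1)` of the partition
with Young diagram `Y`. -/
noncomputable def ewensEig (θ : ℝ) (n : ℕ) (Y : YoungDiagram) : ℝ :=
  (∏ b ∈ Y.cells, (θ + b.2 - b.1)) / ∏ j ∈ Finset.range n, (θ + j)

section Aux

lemma prod_cells_eq (Y : YoungDiagram) (R : ℕ) (hR : ∀ i, R ≤ i → Y.rowLen i = 0)
    (f : ℕ → ℕ → ℝ) :
    ∏ c ∈ Y.cells, f c.1 c.2 = ∏ i ∈ range R, ∏ j ∈ range (Y.rowLen i), f i j := by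
  have hcells : Y.cells = (range R).biUnion (fun i => Y.row i) := by
    ext c
    simp only [mem_biUnion, mem_range, YoungDiagram.mem_row_iff, YoungDiagram.mem_cells]
    constructor
    · intro hc
      refine ⟨c.1, ?_, hc, rfl⟩
      by_contra h
      push_neg at h
      have := hR c.1 h
      rw [show c = (c.1, c.2) from rfl, YoungDiagram.mem_iff_lt_rowLen, this] at hc
      omega
    · rintro ⟨i, _, hc, rfl⟩; exact hc
  rw [hcells, Finset.prod_biUnion]
  · apply Finset.prod_congr rfl
    intro i _
    rw [YoungDiagram.row_eq_prod, Finset.prod_product]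
    simp
  · intro x _ y _ hxy
    simp only [Finset.disjoint_left]
    intro c hc hc'
    rw [YoungDiagram.mem_row_iff] at hc hc'
    exact hxy (hc.2 ▸ hc'.2 ▸ rfl)

lemma fact_prod (n : ℕ) : ∀ a : ℕ,
    (∏ j ∈ range a, ((n:ℝ)+1+j)) * n.factorial = (n+a).factorial := by
  intro a
  induction a with
  | zero => simp
  | succ a ih =>
    rw [prod_range_succ, mul_right_comm, ih, show n + (a+1) = (n+a)+1 from rfl,
      Nat.factorial_succ]
    push_cast; ring

lemma tele (c : ℝ) (hc : 0 < c) : ∀ m : ℕ, ∏ j ∈ range m, ((c+j)/(c+j+1)) = c/(c+m) := by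
  intro m
  induction m with
  | zero => simp [div_self hc.ne']
  | succ m ih =>
    rw [prod_range_succ, ih]
    have h1 : c + (m:ℝ) ≠ 0 := by positivity
    have h2 : c + (m:ℝ) + 1 ≠ 0 := by positivity
    push_cast
    rw [div_mul_div_comm, div_eq_div_iff (by positivity) (by positivity)]
    ring

lemma one_add_sum_le_prod (s : Finset ℕ) (f : ℕ → ℝ) (hf : ∀ i ∈ s, 0 ≤ f i) :
    1 + ∑ i ∈ s, f i ≤ ∏ i ∈ s, (1 + f i) := by
  induction s using Finset.cons_induction with
  | empty => simp
  | cons a s ha ih =>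
    rw [prod_cons, sum_cons]
    have h1 : 0 ≤ f a := hf a (mem_cons_self a s)
    have h2 : ∀ i ∈ s, 0 ≤ f i := fun i hi => hf i (mem_cons_of_mem hi)
    have h3 := ih h2
    have h4 : 0 ≤ ∑ i ∈ s, f i := sum_nonneg h2
    nlinarith

lemma key_pow (y : ℝ) (hy : 0 ≤ y) (hy1 : y ≤ 1) (m : ℕ) : (1-y)^m ≤ 1/(1+m*y) := by
  have hm : (0:ℝ) ≤ m := Nat.cast_nonneg m
  have h0 : (0:ℝ) < 1 + m*y := by nlinarith
  rw [le_div_iff₀ h0]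
  calc (1-y)^m * (1+m*y) ≤ (1-y)^m * (1+y)^m := by
        have := one_add_mul_le_pow (by linarith : (-2:ℝ) ≤ y) m
        have hnn : (0:ℝ) ≤ (1-y)^m := pow_nonneg (by linarith) m
        nlinarith
    _ = ((1-y)*(1+y))^m := (mul_pow _ _ _).symm
    _ ≤ 1 := pow_le_one₀ (by nlinarith) (by nlinarith)

lemma gauss (q : ℕ) : ∑ i ∈ range q, ((i:ℝ)+1) = q*(q+1)/2 := by
  induction q with
  | zero => simp
  | succ q ih => rw [sum_range_succ, ih]; push_cast; ring

lemma numeric_step (aR qR bR nR : ℝ) (ha : 1 ≤ aR) (hq : 2 ≤ qR) (hb : 0 ≤ bR)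
    (hs : qR*aR + bR = nR) : 1*(nR+aR) ≤ aR*(qR*(qR+1)/2) + bR*(qR+1) := by
  nlinarith [mul_nonneg (mul_nonneg (by linarith : (0:ℝ) ≤ aR) (by linarith : (0:ℝ) ≤ qR+1))
      (by linarith : (0:ℝ) ≤ qR-2),
    mul_nonneg hb (by linarith : (0:ℝ) ≤ qR)]

end Aux
set_option maxHeartbeats 2000000 in
lemma ratio_le_half (n a b q : ℕ) (ha : 0 < a) (hq : 0 < q) (hb : b < a)
    (hsum : q*a+b = n) :
    (∏ i ∈ range q, ∏ j ∈ range a, (((n:ℝ)+j-i)/((n:ℝ)+1+j))) *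
      (∏ j ∈ range b, (((n:ℝ)+j-q)/((n:ℝ)+1+j))) ≤ 1/2 := by
  have hqn : q ≤ n := by nlinarith
  have han : a ≤ n := by nlinarith
  have hn : 0 < n := by omega
  have hnR : (0:ℝ) < n := by exact_mod_cast hn
  have hsumR : (q:ℝ)*a + b = n := by exact_mod_cast hsum
  rcases Nat.lt_or_ge q 2 with h2 | h2
  · -- q = 1
    have hq1 : q = 1 := by omega
    subst hq1
    rw [prod_range_one]
    have e1 : ∏ j ∈ range a, (((n:ℝ)+j-(0:ℕ))/((n:ℝ)+1+j)) = n/(n+a) := by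
      rw [← tele (n:ℝ) hnR a]
      apply prod_congr rfl
      intro j _
      push_cast
      ring_nf
    rw [e1]
    rcases Nat.eq_zero_or_pos b with hb0 | hb1
    · subst hb0
      have haa : a = n := by omega
      subst haa
      simp only [range_zero, prod_empty, mul_one]
      rw [div_le_div_iff₀ (by positivity) (by norm_num)]
      nlinarith
    · have hn2 : 2 ≤ n := by omega
      have hn2R : (2:ℝ) ≤ n := by exact_mod_cast hn2
      have e2 : ∏ j ∈ range b, (((n:ℝ)+j-(1:ℕ))/((n:ℝ)+1+j))
          = ((n:ℝ)-1)/((n:ℝ)-1+b) * ((n:ℝ)/((n:ℝ)+b)) := by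
        rw [← tele ((n:ℝ)-1) (by linarith) b, ← tele (n:ℝ) hnR b, ← prod_mul_distrib]
        apply prod_congr rfl
        intro j _
        have hj1 : ((n:ℝ) + j) ≠ 0 := by positivity
        have hj2 : ((n:ℝ) + j + 1) ≠ 0 := by positivity
        have hjn : (0:ℝ) ≤ (j:ℝ) := Nat.cast_nonneg j
        push_cast
        rw [div_mul_div_comm]
        rw [div_eq_div_iff (by positivity) (by nlinarith)]
        ring
      rw [e2]
      have hb1R : (1:ℝ) ≤ b := by exact_mod_cast hb1
      have hbaR : (b:ℝ) < a := by exact_mod_cast hb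
      have hanR : (a:ℝ) ≤ n := by exact_mod_cast han
      have hbnR : (b:ℝ) ≤ n := by linarith
      have haval : (a:ℝ) = (n:ℝ) - b := by push_cast at hsumR; linarith
      have hd0 : (0:ℝ) < (n:ℝ)+a := by positivity
      have hd1 : (0:ℝ) < (n:ℝ)-1+b := by linarith
      have hd2 : (0:ℝ) < (n:ℝ)+b := by positivity
      rw [div_mul_div_comm, div_mul_div_comm,
        div_le_div_iff₀ (mul_pos hd0 (mul_pos hd1 hd2)) (by norm_num)]
      rw [haval]
      nlinarith [mul_nonneg (by linarith : (0:ℝ) ≤ (b:ℝ))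
        (by nlinarith : (0:ℝ) ≤ 3*(n:ℝ)^2 - n - (b:ℝ)^2 + b)]
  · -- q ≥ 2
    have hq2R : (2:ℝ) ≤ q := by exact_mod_cast h2
    set m : ℝ := (n:ℝ) + a with hm
    have hm0 : (0:ℝ) < m := by positivity
    have FB : ∀ i j : ℕ, i ≤ n → j + 1 ≤ a →
        ((n:ℝ)+j-i)/((n:ℝ)+1+j) ≤ 1 - ((i:ℝ)+1)/m := by
      intro i j hi hj
      have h1 : (0:ℝ) < (n:ℝ)+1+j := by positivity
      have hiR : (i:ℝ) ≤ n := by exact_mod_cast hi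
      have hjR : (j:ℝ)+1 ≤ a := by exact_mod_cast hj
      have key : ((n:ℝ)+j-i) * m ≤ (m-((i:ℝ)+1)) * ((n:ℝ)+1+j) := by
        have : (0:ℝ) ≤ ((i:ℝ)+1) * ((a:ℝ)-1-j) := by
          apply mul_nonneg (by positivity) (by linarith)
        rw [hm]; nlinarith
      calc ((n:ℝ)+j-i)/((n:ℝ)+1+j) ≤ (m-((i:ℝ)+1))/m := by
            rw [div_le_div_iff₀ h1 hm0]; linarith
        _ = 1 - ((i:ℝ)+1)/m := by field_simp
    have hyb : ∀ i : ℕ, i ≤ q → 0 ≤ ((i:ℝ)+1)/m ∧ ((i:ℝ)+1)/m ≤ 1 := by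
      intro i hi
      have hiR : (i:ℝ) ≤ q := by exact_mod_cast hi
      constructor
      · positivity
      · rw [div_le_one hm0, hm]
        have : (q:ℝ) ≤ n := by exact_mod_cast hqn
        have : (1:ℝ) ≤ a := by exact_mod_cast ha
        linarith
    have hterm_nonneg : ∀ i j : ℕ, i ≤ n → 0 ≤ ((n:ℝ)+j-i)/((n:ℝ)+1+j) := by
      intro i j hi
      have hiR : (i:ℝ) ≤ n := by exact_mod_cast hi
      have : (0:ℝ) ≤ (n:ℝ)+j-i := by
        have : (0:ℝ) ≤ (j:ℝ) := Nat.cast_nonneg j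
        linarith
      positivity
    -- step 1 : main block
    have hstep1 : (∏ i ∈ range q, ∏ j ∈ range a, (((n:ℝ)+j-i)/((n:ℝ)+1+j)))
        ≤ ∏ i ∈ range q, (1 - ((i:ℝ)+1)/m)^a := by
      apply prod_le_prod
      · intro i hi
        exact prod_nonneg fun j _ => hterm_nonneg i j (le_trans (le_of_lt (mem_range.mp hi)) hqn)
      · intro i hi
        have hiq : i < q := mem_range.mp hi
        calc ∏ j ∈ range a, (((n:ℝ)+j-i)/((n:ℝ)+1+j))
            ≤ ∏ j ∈ range a, (1 - ((i:ℝ)+1)/m) := by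
              apply prod_le_prod
              · intro j _; exact hterm_nonneg i j (le_trans hiq.le hqn)
              · intro j hj
                exact FB i j (le_trans hiq.le hqn) (mem_range.mp hj)
          _ = (1 - ((i:ℝ)+1)/m)^a := by rw [prod_const, card_range]
    have hstep2 : (∏ j ∈ range b, (((n:ℝ)+j-q)/((n:ℝ)+1+j)))
        ≤ (1 - ((q:ℝ)+1)/m)^b := by
      calc ∏ j ∈ range b, (((n:ℝ)+j-q)/((n:ℝ)+1+j))
          ≤ ∏ j ∈ range b, (1 - ((q:ℝ)+1)/m) := by
            apply prod_le_prod
            · intro j _; exact hterm_nonneg q j hqn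
            · intro j hj
              exact FB q j hqn (by have := mem_range.mp hj; omega)
        _ = (1 - ((q:ℝ)+1)/m)^b := by rw [prod_const, card_range]
    -- step 2 : key_pow bounds
    have hstep3 : ∏ i ∈ range q, (1 - ((i:ℝ)+1)/m)^a
        ≤ ∏ i ∈ range q, 1/(1 + (a:ℝ)*(((i:ℝ)+1)/m)) := by
      apply prod_le_prod
      · intro i hi
        have := hyb i (le_of_lt (mem_range.mp hi))
        exact pow_nonneg (by linarith [this.2]) a
      · intro i hi
        have := hyb i (le_of_lt (mem_range.mp hi))
        exact key_pow _ this.1 this.2 a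
    have hstep4 : (1 - ((q:ℝ)+1)/m)^b ≤ 1/(1 + (b:ℝ)*(((q:ℝ)+1)/m)) := by
      have := hyb q le_rfl
      exact key_pow _ this.1 this.2 b
    -- combine products
    set S : ℝ := ∑ i ∈ range q, (a:ℝ)*(((i:ℝ)+1)/m) with hS
    have hSnn : ∀ i ∈ range q, (0:ℝ) ≤ (a:ℝ)*(((i:ℝ)+1)/m) := by
      intro i hi
      have := hyb i (le_of_lt (mem_range.mp hi))
      positivity
    have hprodP : 1 + S ≤ ∏ i ∈ range q, (1 + (a:ℝ)*(((i:ℝ)+1)/m)) :=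
      one_add_sum_le_prod _ _ hSnn
    have hPpos : (0:ℝ) < ∏ i ∈ range q, (1 + (a:ℝ)*(((i:ℝ)+1)/m)) := by
      apply prod_pos
      intro i hi
      have := hSnn i hi
      linarith
    have hSval : S = ((a:ℝ)/m) * ((q:ℝ)*((q:ℝ)+1)/2) := by
      rw [hS]
      have hc : ∀ i ∈ range q, (a:ℝ)*(((i:ℝ)+1)/m) = ((a:ℝ)/m) * ((i:ℝ)+1) :=
        fun i _ => by ring
      rw [sum_congr rfl hc, ← mul_sum, gauss]
    set yq : ℝ := ((q:ℝ)+1)/m with hyq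
    have hQnn : (0:ℝ) ≤ (b:ℝ)*yq := by
      have := (hyb q le_rfl).1
      positivity
    have hone : (1:ℝ) ≤ S + (b:ℝ)*yq := by
      have haR : (1:ℝ) ≤ a := by exact_mod_cast ha
      have key : S + (b:ℝ)*yq = ((a:ℝ)*((q:ℝ)*((q:ℝ)+1)/2) + (b:ℝ)*((q:ℝ)+1))/m := by
        rw [hSval, hyq]; field_simp
      rw [key, le_div_iff₀ hm0, hm]
      have hb0R : (0:ℝ) ≤ b := Nat.cast_nonneg b
      exact numeric_step (a:ℝ) (q:ℝ) (b:ℝ) (n:ℝ) haR hq2R hb0R hsumR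
    have hSnn' : (0:ℝ) ≤ S := sum_nonneg hSnn
    have hPQ : (2:ℝ) ≤ (∏ i ∈ range q, (1 + (a:ℝ)*(((i:ℝ)+1)/m))) * (1 + (b:ℝ)*yq) := by
      have h1 : (1+S)*(1+(b:ℝ)*yq) ≤ (∏ i ∈ range q, (1 + (a:ℝ)*(((i:ℝ)+1)/m))) * (1+(b:ℝ)*yq) := by
        apply mul_le_mul_of_nonneg_right hprodP (by linarith)
      have h2' : (2:ℝ) ≤ (1+S)*(1+(b:ℝ)*yq) := by nlinarith [mul_nonneg hSnn' hQnn]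
      linarith
    have hPQpos : (0:ℝ) < (∏ i ∈ range q, (1 + (a:ℝ)*(((i:ℝ)+1)/m))) * (1 + (b:ℝ)*yq) := by
      apply mul_pos hPpos (by linarith)
    -- chain
    calc (∏ i ∈ range q, ∏ j ∈ range a, (((n:ℝ)+j-i)/((n:ℝ)+1+j))) *
          (∏ j ∈ range b, (((n:ℝ)+j-q)/((n:ℝ)+1+j)))
        ≤ (∏ i ∈ range q, (1 - ((i:ℝ)+1)/m)^a) * ((1 - ((q:ℝ)+1)/m)^b) := by
          apply mul_le_mul hstep1 hstep2
          · exact prod_nonneg fun j _ => hterm_nonneg q j hqn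
          · exact prod_nonneg fun i hi =>
              pow_nonneg (by linarith [(hyb i (le_of_lt (mem_range.mp hi))).2]) a
      _ ≤ (∏ i ∈ range q, 1/(1 + (a:ℝ)*(((i:ℝ)+1)/m))) * (1/(1 + (b:ℝ)*yq)) := by
          apply mul_le_mul hstep3 hstep4
          · exact pow_nonneg (by linarith [(hyb q le_rfl).2]) b
          · exact prod_nonneg fun i hi => by
              have := hSnn i hi
              positivity
      _ = 1/((∏ i ∈ range q, (1 + (a:ℝ)*(((i:ℝ)+1)/m))) * (1 + (b:ℝ)*yq)) := by
          have hp : (∏ i ∈ range q, 1/(1 + (a:ℝ)*(((i:ℝ)+1)/m)))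
              = 1/(∏ i ∈ range q, (1 + (a:ℝ)*(((i:ℝ)+1)/m))) := by
            simp only [one_div]
            exact prod_inv_distrib _
          rw [hp, div_mul_div_comm, one_mul]
      _ ≤ 1/2 := by
          apply one_div_le_one_div_of_le (by norm_num) hPQ

set_option maxHeartbeats 2000000 in
/-- For the partition `λ^α = (αn, …, αn, rn)` of `n` with `q` parts equal to `a = αn`
and one part `b = rn` (so `qa + b = n`, `0 ≤ b < a`), the Ewens eigenvalue with `θ = n`
satisfies `β_{λ^α} ≤ ((n+a)!)^q (n+b)! / ((n!)^q (2n)!)`. -/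
theorem stmt19 (n a b q : ℕ) (ha : 0 < a) (hq : 0 < q) (hb : b < a)
    (hsum : q * a + b = n)
    (Y : YoungDiagram)
    (hY : Y.rowLens = List.replicate q a ++ (if b = 0 then [] else [b])) :
    ewensEig (n : ℝ) n Y ≤
      (((n + a).factorial : ℝ)) ^ q * ((n + b).factorial : ℝ) /
        (((n.factorial : ℝ)) ^ q * (((2 * n).factorial : ℝ))) := by
  have hn : 0 < n := by have := Nat.mul_pos hq ha; omega
  have hnR : (0:ℝ) < n := by exact_mod_cast hn
  -- row length facts
  have hlenY : Y.rowLens.length = q + (if b = 0 then 0 else 1) := by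
    rw [hY]; split <;> simp
  have hzero : ∀ i, q + (if b = 0 then 0 else 1) ≤ i → Y.rowLen i = 0 := by
    intro i hi
    by_contra h
    have hpos : 0 < Y.rowLen i := Nat.pos_of_ne_zero h
    have hmem : (i, 0) ∈ Y := YoungDiagram.mem_iff_lt_rowLen.mpr hpos
    rw [YoungDiagram.mem_iff_lt_colLen] at hmem
    rw [← YoungDiagram.length_rowLens, hlenY] at hmem
    omega
  have hrow : ∀ i, i < q → Y.rowLen i = a := by
    intro i hi
    have h1 : i < Y.rowLens.length := by rw [hlenY]; omega
    have h2 : Y.rowLen i = Y.rowLens[i] := YoungDiagram.get_rowLens.symm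
    rw [h2, List.getElem_of_eq hY h1,
      List.getElem_append_left (by simpa using hi), List.getElem_replicate]
  have hrowq : b ≠ 0 → Y.rowLen q = b := by
    intro hb0
    have h1 : q < Y.rowLens.length := by rw [hlenY]; simp [hb0]
    have h2 : Y.rowLen q = Y.rowLens[q] := YoungDiagram.get_rowLens.symm
    rw [h2, List.getElem_of_eq hY h1]
    rw [List.getElem_append_right (by simp)]
    simp [hb0]
  -- product over cells
  have hcells : (∏ c ∈ Y.cells, ((n:ℝ) + c.2 - c.1)) =
      (∏ i ∈ range q, ∏ j ∈ range a, ((n:ℝ)+j-i)) *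
        (∏ j ∈ range b, ((n:ℝ)+j-q)) := by
    by_cases hb0 : b = 0
    · rw [prod_cells_eq Y q (fun i hi => hzero i (by simp [hb0]; omega))
        (fun i j => (n:ℝ)+j-i)]
      rw [hb0]
      simp only [range_zero, prod_empty, mul_one]
      exact prod_congr rfl fun i hi => by rw [hrow i (mem_range.mp hi)]
    · rw [prod_cells_eq Y (q+1) (fun i hi => hzero i (by simp [hb0] at hi ⊢; omega))
        (fun i j => (n:ℝ)+j-i)]
      rw [prod_range_succ, hrowq hb0]
      congr 1
      exact prod_congr rfl fun i hi => by rw [hrow i (mem_range.mp hi)]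
  -- notation
  have hD : (0:ℝ) < ∏ j ∈ range n, ((n:ℝ)+j) :=
    prod_pos fun j _ => by positivity
  have hF : (0:ℝ) < ∏ j ∈ range n, ((n:ℝ)+1+j) :=
    prod_pos fun j _ => by positivity
  have hA : (0:ℝ) < ∏ j ∈ range a, ((n:ℝ)+1+j) :=
    prod_pos fun j _ => by positivity
  have hB : (0:ℝ) < ∏ j ∈ range b, ((n:ℝ)+1+j) :=
    prod_pos fun j _ => by positivity
  -- F = 2 D
  have hFD : (∏ j ∈ range n, ((n:ℝ)+1+j)) = 2 * ∏ j ∈ range n, ((n:ℝ)+j) := by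
    have h1 : ∏ j ∈ range n, (((n:ℝ)+j)/((n:ℝ)+1+j)) = (n:ℝ)/((n:ℝ)+n) := by
      rw [← tele (n:ℝ) hnR n]
      exact prod_congr rfl fun j _ => by ring_nf
    rw [prod_div_distrib] at h1
    have h2 : (n:ℝ)/((n:ℝ)+n) = 1/2 := by
      rw [div_eq_div_iff (by positivity) (by norm_num)]; ring
    rw [h2, div_eq_div_iff hF.ne' (by norm_num : (2:ℝ) ≠ 0)] at h1
    linarith
  -- rewrite RHS
  have hfac : (0:ℝ) < (n.factorial : ℝ) := by
    exact_mod_cast Nat.factorial_pos n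
  have hRHS : (((n + a).factorial : ℝ)) ^ q * ((n + b).factorial : ℝ) /
        (((n.factorial : ℝ)) ^ q * (((2 * n).factorial : ℝ)))
      = (∏ j ∈ range a, ((n:ℝ)+1+j))^q * (∏ j ∈ range b, ((n:ℝ)+1+j)) /
        (∏ j ∈ range n, ((n:ℝ)+1+j)) := by
    rw [two_mul, ← fact_prod n a, ← fact_prod n b, ← fact_prod n n]
    rw [mul_pow]
    field_simp
  rw [hRHS]
  simp only [ewensEig]
  rw [hcells, div_le_div_iff₀ hD hF]
  -- ratio bound
  have hhalf := ratio_le_half n a b q ha hq hb hsum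
  have e3 : (∏ i ∈ range q, ∏ j ∈ range a, (((n:ℝ)+j-i)/((n:ℝ)+1+j)))
      = (∏ i ∈ range q, ∏ j ∈ range a, ((n:ℝ)+j-i)) /
        (∏ j ∈ range a, ((n:ℝ)+1+j))^q := by
    calc ∏ i ∈ range q, ∏ j ∈ range a, (((n:ℝ)+j-i)/((n:ℝ)+1+j))
        = ∏ i ∈ range q, ((∏ j ∈ range a, ((n:ℝ)+j-i)) /
            (∏ j ∈ range a, ((n:ℝ)+1+j))) :=
          prod_congr rfl fun i _ => prod_div_distrib _ _
      _ = _ := by rw [prod_div_distrib, prod_const, card_range]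
  have e4 : (∏ j ∈ range b, (((n:ℝ)+j-q)/((n:ℝ)+1+j)))
      = (∏ j ∈ range b, ((n:ℝ)+j-q)) / (∏ j ∈ range b, ((n:ℝ)+1+j)) :=
    prod_div_distrib _ _
  rw [e3, e4, div_mul_div_comm,
    div_le_div_iff₀ (mul_pos (pow_pos hA q) hB) (by norm_num)] at hhalf
  rw [hFD]
  calc (∏ i ∈ range q, ∏ j ∈ range a, ((n:ℝ)+j-i)) *
        (∏ j ∈ range b, ((n:ℝ)+j-q)) * (2 * ∏ j ∈ range n, ((n:ℝ)+j))
      = ((∏ i ∈ range q, ∏ j ∈ range a, ((n:ℝ)+j-i)) *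
          (∏ j ∈ range b, ((n:ℝ)+j-q)) * 2) * (∏ j ∈ range n, ((n:ℝ)+j)) := by
        ring
    _ ≤ (1 * ((∏ j ∈ range a, ((n:ℝ)+1+j))^q * (∏ j ∈ range b, ((n:ℝ)+1+j)))) *
          (∏ j ∈ range n, ((n:ℝ)+j)) :=
        mul_le_mul_of_nonneg_right hhalf hD.le
    _ = (∏ j ∈ range a, ((n:ℝ)+1+j))^q * (∏ j ∈ range b, ((n:ℝ)+1+j)) *
          (∏ j ∈ range n, ((n:ℝ)+j)) := by ring
end
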